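/- Well-posedness of the fixed-point iteration (Lemma 6.3): Let τ > 0, let (ρ_h^{n−1}, m_h^{n−1}) ∈ Q_h × V_h and (ρ̃_h, m̃_h) ∈ Q_h × V_h be given with ρ_h^{n−1} > 0 and ρ̃_h > 0. Then the linear system of the fixed-point iteration has a unique solution (ρ_h, m_h) ∈ Q_h × V_h. -/

import Mathlib

/-- The network pairing `(u, w)_E = Σ_{e∈E} ∫_0^{ℓ_e} u_e w_e dx` of two families of
functions on the edges of a pipe network. -/
noncomputable def pairE {E : Type} [Fintype E] (ℓ : E → ℝ) (u w : E → ℝ → ℝ) : ℝ :=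
  ∑ e, ∫ x in (0 : ℝ)..(ℓ e), u e x * w e x

/-- `q` is piecewise constant on the uniform mesh of `[0, ℓ e]` into `N e` subintervals,
for every edge `e`.  This is the space `Q_h` of the mixed finite element method
(the value at the right endpoint `ℓ e` is irrelevant). -/
def IsPwConst {E : Type} (N : E → ℕ) (ℓ : E → ℝ) (q : E → ℝ → ℝ) : Prop :=
  ∀ e, ∀ i : ℕ, i < N e →
    ∀ x ∈ Set.Ico ((i : ℝ) * ℓ e / (N e : ℝ)) (((i : ℝ) + 1) * ℓ e / (N e : ℝ)),
      q e x = q e ((i : ℝ) * ℓ e / (N e : ℝ))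

/-- `v` is continuous on `[0, ℓ e]` and affine on each subinterval of the uniform mesh
of `[0, ℓ e]` into `N e` subintervals, for every edge `e`. -/
def IsPwAffine {E : Type} (N : E → ℕ) (ℓ : E → ℝ) (v : E → ℝ → ℝ) : Prop :=
  (∀ e, ContinuousOn (v e) (Set.Icc 0 (ℓ e))) ∧
  (∀ e, ∀ i : ℕ, i < N e → ∃ α β : ℝ,
    ∀ x ∈ Set.Icc ((i : ℝ) * ℓ e / (N e : ℝ)) (((i : ℝ) + 1) * ℓ e / (N e : ℝ)),
      v e x = α * x + β)

/-- The vertex sum `Σ_{e∈E(w)} f_e(w) n_e(w)` at a vertex `w`, where `n_e(w) = -1` if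
`w` is the initial vertex `src e`, `n_e(w) = +1` if `w` is the terminal vertex `dst e`,
and a function `f_e` is evaluated at `src e` as `f e 0` and at `dst e` as `f e (ℓ e)`. -/
noncomputable def vtxSum {V E : Type} [Fintype E] [DecidableEq V]
    (src dst : E → V) (ℓ : E → ℝ) (f : E → ℝ → ℝ) (w : V) : ℝ :=
  ∑ e, ((if dst e = w then f e (ℓ e) else 0) - (if src e = w then f e 0 else 0))

/-- The space `V_h`: continuous piecewise affine families that satisfy the conservative
coupling condition `Σ_{e∈E(w)} v_e(w) n_e(w) = 0` at every vertex `w`. -/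
def InVh {V E : Type} [Fintype E] [DecidableEq V]
    (src dst : E → V) (N : E → ℕ) (ℓ : E → ℝ) (v : E → ℝ → ℝ) : Prop :=
  IsPwAffine N ℓ v ∧ ∀ w : V, vtxSum src dst ℓ v w = 0

/-- The subinterval-wise (broken) spatial derivative of a piecewise affine family `v`:
on the subinterval of the mesh containing `x`, it is the slope of `v e` there. -/
noncomputable def Dx {E : Type} (N : E → ℕ) (ℓ : E → ℝ) (v : E → ℝ → ℝ)
    (e : E) (x : ℝ) : ℝ :=
  let i : ℕ := min (N e - 1) ⌊x * (N e : ℝ) / ℓ e⌋₊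
  (v e (((i : ℝ) + 1) * ℓ e / (N e : ℝ)) - v e ((i : ℝ) * ℓ e / (N e : ℝ)))
    * ((N e : ℝ) / ℓ e)

/-- The linear system of the fixed-point iteration (Problem 6.1) for a single time step,
with data `(ρp, mp)` (the previous time step), time step `τ` and linearization point
`(ρl, ml)` (denoted `(ρ̃_h, m̃_h)` in the paper), determining `(ρ, m) ∈ Q_h × V_h`:
for all `q_h ∈ Q_h` and all `v_h ∈ V_h`,
`(1/τ)(ρ_h, q_h)_E + (∂ₓ m_h, q_h)_E = (1/τ)(ρⁿ⁻¹, q_h)_E` and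
`(1/τ)((1/ρⁿ⁻¹) m_h, v_h)_E
  - ( (m̃/(2ρ̃²)) m_h + (P'(ρ̃)/ρ̃) ρ_h - (a/ρ̃²) ∂ₓ m_h, ∂ₓ v_h )_E
  + ( (m̃/(2ρ̃²)) ∂ₓ m_h + (b |m̃|/ρ̃²) m_h, v_h )_E
  = (1/τ)( (1/ρⁿ⁻¹) mⁿ⁻¹ + (m̃/(2ρ̃²))(ρ̃ - ρⁿ⁻¹), v_h )_E`,
with `P_e'(ρ) = c_e γ/(γ-1) ρ^(γ-1)` on edge `e`. -/
def FixedPtLin {V E : Type} [Fintype V] [Fintype E] [DecidableEq V]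
    (src dst : E → V) (N : E → ℕ) (ℓ : E → ℝ) (γ : ℝ) (a b c : E → ℝ)
    (τ : ℝ) (ρp mp ρl ml ρ m : E → ℝ → ℝ) : Prop :=
  (∀ q : E → ℝ → ℝ, IsPwConst N ℓ q →
      (1 / τ) * pairE ℓ ρ q + pairE ℓ (Dx N ℓ m) q = (1 / τ) * pairE ℓ ρp q) ∧
  (∀ v : E → ℝ → ℝ, InVh src dst N ℓ v →
      (1 / τ) * pairE ℓ (fun e x => (1 / ρp e x) * m e x) v
        - pairE ℓ (fun e x => ml e x / (2 * ρl e x ^ 2) * m e x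
            + (c e * γ / (γ - 1) * ρl e x ^ (γ - 1) / ρl e x) * ρ e x
            - a e / ρl e x ^ 2 * Dx N ℓ m e x) (Dx N ℓ v)
        + pairE ℓ (fun e x => ml e x / (2 * ρl e x ^ 2) * Dx N ℓ m e x
            + b e * |ml e x| / ρl e x ^ 2 * m e x) v
      = (1 / τ) * pairE ℓ (fun e x => (1 / ρp e x) * mp e x
            + ml e x / (2 * ρl e x ^ 2) * (ρl e x - ρp e x)) v)


namespace PipeNet
open MeasureTheory Set intervalIntegral

variable {n : ℕ} {L : ℝ}


/-- node `i` of the uniform mesh -/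
noncomputable def nd (n : ℕ) (L : ℝ) (i : ℕ) : ℝ := (i : ℝ) * L / (n : ℝ)

/-- index of the cell containing `x` (clamped) -/
noncomputable def idx (n : ℕ) (L : ℝ) (x : ℝ) : ℕ := min (n - 1) ⌊x * (n : ℝ) / L⌋₊

variable {n : ℕ} {L : ℝ}

lemma nd_mono (hL : 0 < L) {i j : ℕ} (h : i ≤ j) : nd n L i ≤ nd n L j := by
  unfold nd
  have hij : (i:ℝ) ≤ (j:ℝ) := by exact_mod_cast h
  gcongr

lemma nd_zero : nd n L 0 = 0 := by simp [nd]

lemma nd_last (hn : 1 ≤ n) : nd n L n = L := by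
  unfold nd
  field_simp

lemma nd_succ (i : ℕ) : nd n L (i+1) = ((i : ℝ) + 1) * L / (n : ℝ) := by
  unfold nd; push_cast; ring

lemma nd_succ_sub (hn : 1 ≤ n) (i : ℕ) : nd n L (i+1) - nd n L i = L / n := by
  have hn' : (n : ℝ) ≠ 0 := by positivity
  unfold nd; push_cast; field_simp; ring

lemma nd_lt_succ (hn : 1 ≤ n) (hL : 0 < L) (i : ℕ) : nd n L i < nd n L (i+1) := by
  have := nd_succ_sub (L := L) hn i
  have hpos : 0 < L / n := by positivity
  linarith

lemma nd_nonneg (hL : 0 < L) (i : ℕ) : 0 ≤ nd n L i := by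
  unfold nd; positivity

lemma nd_le (hn : 1 ≤ n) (hL : 0 < L) {i : ℕ} (hi : i ≤ n) : nd n L i ≤ L := by
  have := nd_mono (n := n) hL hi
  rwa [nd_last hn] at this

lemma idx_lt (hn : 1 ≤ n) (L : ℝ) (x : ℝ) : idx n L x < n := by
  have : min (n-1) ⌊x * (n : ℝ) / L⌋₊ ≤ n - 1 := min_le_left _ _
  unfold idx; omega

lemma idx_eq (hn : 1 ≤ n) (hL : 0 < L) {j : ℕ} (hj : j < n)
    {x : ℝ} (hx : x ∈ Set.Ico (nd n L j) (nd n L (j+1))) : idx n L x = j := by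
  have hn' : (0:ℝ) < n := by exact_mod_cast hn
  have h1 : (j : ℝ) ≤ x * n / L := by
    rw [le_div_iff₀ hL]
    have := hx.1
    rw [nd, div_le_iff₀ hn'] at this
    linarith
  have h2 : x * n / L < (j : ℝ) + 1 := by
    rw [div_lt_iff₀ hL]
    have := hx.2
    rw [nd_succ, lt_div_iff₀ hn'] at this
    linarith
  have hx0 : (0:ℝ) ≤ x * n / L := le_trans (by positivity) h1
  have hfl : ⌊x * (n:ℝ) / L⌋₊ = j := by
    rw [Nat.floor_eq_iff hx0]
    exact ⟨h1, by exact_mod_cast h2⟩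
  unfold idx
  rw [hfl]
  exact min_eq_right (by omega)

lemma mem_cell_idx (hn : 1 ≤ n) (hL : 0 < L) {x : ℝ} (hx : x ∈ Set.Ico 0 L) :
    x ∈ Set.Ico (nd n L (idx n L x)) (nd n L (idx n L x + 1)) := by
  have hn' : (0:ℝ) < n := by exact_mod_cast hn
  have hx0 : 0 ≤ x * n / L := by
    have := hx.1
    positivity
  have hflt : ⌊x * (n:ℝ) / L⌋₊ < n := by
    apply Nat.floor_lt hx0 |>.2
    rw [div_lt_iff₀ hL]
    calc x * (n:ℝ) < L * n := by nlinarith [hx.2]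
    _ = n * L := by ring
  have hidx : idx n L x = ⌊x * (n:ℝ) / L⌋₊ := min_eq_right (by omega)
  constructor
  · rw [hidx, nd, div_le_iff₀ hn']
    have := Nat.floor_le hx0
    calc (⌊x * (n:ℝ) / L⌋₊ : ℝ) * L ≤ (x * n / L) * L := by nlinarith
    _ = x * n := by field_simp
  · rw [hidx, nd_succ, lt_div_iff₀ hn']
    have := Nat.lt_floor_add_one (x * (n:ℝ) / L)
    calc x * (n:ℝ) = (x * n / L) * L := by field_simp
    _ < ((⌊x * (n:ℝ) / L⌋₊ : ℝ) + 1) * L := by nlinarith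

lemma mem_cell_idx_Icc (hn : 1 ≤ n) (hL : 0 < L) {x : ℝ} (hx : x ∈ Set.Icc 0 L) :
    x ∈ Set.Icc (nd n L (idx n L x)) (nd n L (idx n L x + 1)) := by
  rcases eq_or_lt_of_le hx.2 with h | h
  · have hLn : L * (n:ℝ) / L = (n:ℝ) := by field_simp
    have hidx : idx n L x = n - 1 := by
      unfold idx
      rw [h, hLn]
      simp [Nat.floor_natCast, min_eq_left (by omega : n - 1 ≤ n)]
    rw [hidx, h]
    have h1 : n - 1 + 1 = n := by omega
    constructor
    · exact nd_le hn hL (by omega)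
    · rw [h1, nd_last hn]
  · have := mem_cell_idx hn hL ⟨hx.1, h⟩
    exact ⟨this.1, le_of_lt this.2⟩

/-- continuous piecewise-affine interpolant of nodal values `μ` -/
noncomputable def interp (n : ℕ) (L : ℝ) (μ : ℕ → ℝ) (x : ℝ) : ℝ :=
  μ 0 + ∑ i ∈ Finset.range n,
    (μ (i+1) - μ i) * ((n : ℝ) / L) * (max (nd n L i) (min (nd n L (i+1)) x) - nd n L i)

lemma interp_continuous (μ : ℕ → ℝ) : Continuous (interp n L μ) := by
  unfold interp
  refine continuous_const.add (continuous_finset_sum _ fun i _ => ?_)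
  exact (continuous_const.mul ((continuous_const.max
    (continuous_const.min continuous_id)).sub continuous_const))

lemma interp_eval (hn : 1 ≤ n) (hL : 0 < L) (μ : ℕ → ℝ) {j : ℕ} (hj : j < n)
    {x : ℝ} (hx : x ∈ Set.Icc (nd n L j) (nd n L (j+1))) :
    interp n L μ x = μ j + (μ (j+1) - μ j) * ((n : ℝ) / L) * (x - nd n L j) := by
  have hn' : (n : ℝ) ≠ 0 := by positivity
  have hL' : L ≠ 0 := ne_of_gt hL
  unfold interp
  have hsplit : Finset.range n = Finset.range (j+1) ∪ Finset.Ico (j+1) n := by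
    rw [Finset.range_eq_Ico, Finset.range_eq_Ico]
    rw [Finset.Ico_union_Ico_eq_Ico (by omega) (by omega)]
  rw [hsplit, Finset.sum_union (by
    rw [Finset.range_eq_Ico]
    exact Finset.Ico_disjoint_Ico_consecutive 0 (j+1) n)]
  have h2 : ∑ i ∈ Finset.Ico (j+1) n,
      (μ (i+1) - μ i) * ((n : ℝ) / L) * (max (nd n L i) (min (nd n L (i+1)) x) - nd n L i) = 0 := by
    refine Finset.sum_eq_zero fun i hi => ?_
    have hji : j + 1 ≤ i := (Finset.mem_Ico.1 hi).1
    have hxi : x ≤ nd n L i := le_trans hx.2 (nd_mono hL hji)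
    have hmin : min (nd n L (i+1)) x = x := min_eq_right (hxi.trans (nd_mono hL (by omega)))
    rw [hmin, max_eq_left hxi, sub_self, mul_zero]
  rw [h2, add_zero, Finset.sum_range_succ]
  have h1 : ∀ i ∈ Finset.range j,
      (μ (i+1) - μ i) * ((n : ℝ) / L) * (max (nd n L i) (min (nd n L (i+1)) x) - nd n L i)
        = μ (i+1) - μ i := by
    intro i hi
    have hij : i + 1 ≤ j := Finset.mem_range.1 hi
    have hx1 : nd n L (i+1) ≤ x := le_trans (nd_mono hL hij) hx.1
    rw [min_eq_left hx1, max_eq_right (nd_mono hL (by omega)), nd_succ_sub hn]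
    field_simp
  rw [Finset.sum_congr rfl h1, Finset.sum_range_sub]
  rw [min_eq_right hx.2, max_eq_right hx.1]
  ring

lemma interp_node (hn : 1 ≤ n) (hL : 0 < L) (μ : ℕ → ℝ) {j : ℕ} (hj : j ≤ n) :
    interp n L μ (nd n L j) = μ j := by
  rcases lt_or_eq_of_le hj with h | h
  · rw [interp_eval hn hL μ h ⟨le_refl _, le_of_lt (nd_lt_succ hn hL j)⟩]
    ring
  · rw [h]
    have hj1 : n - 1 + 1 = n := by omega
    have := interp_eval hn hL μ (j := n - 1) (by omega)
      (x := nd n L n) (by rw [hj1]; exact ⟨nd_mono hL (by omega), le_refl _⟩)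
    have hsub := nd_succ_sub (L := L) hn (n-1)
    rw [hj1] at hsub
    rw [this, hj1, hsub]
    have hn' : (n:ℝ) ≠ 0 := by positivity
    have hL' : L ≠ 0 := ne_of_gt hL
    field_simp
    ring

lemma interp_add (μ ν : ℕ → ℝ) (x : ℝ) :
    interp n L (fun i => μ i + ν i) x = interp n L μ x + interp n L ν x := by
  simp only [interp]
  have hterm : ∀ i ∈ Finset.range n,
      (μ (i+1) + ν (i+1) - (μ i + ν i)) * ((n:ℝ)/L) * (max (nd n L i) (min (nd n L (i+1)) x) - nd n L i)
        = (μ (i+1) - μ i) * ((n:ℝ)/L) * (max (nd n L i) (min (nd n L (i+1)) x) - nd n L i)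
          + (ν (i+1) - ν i) * ((n:ℝ)/L) * (max (nd n L i) (min (nd n L (i+1)) x) - nd n L i) :=
    fun i _ => by ring
  rw [Finset.sum_congr rfl hterm, Finset.sum_add_distrib]
  ring

lemma interp_smul (c : ℝ) (μ : ℕ → ℝ) (x : ℝ) :
    interp n L (fun i => c * μ i) x = c * interp n L μ x := by
  simp only [interp]
  have hterm : ∀ i ∈ Finset.range n,
      (c * μ (i+1) - c * μ i) * ((n:ℝ)/L) * (max (nd n L i) (min (nd n L (i+1)) x) - nd n L i)
        = c * ((μ (i+1) - μ i) * ((n:ℝ)/L) * (max (nd n L i) (min (nd n L (i+1)) x) - nd n L i)) :=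
    fun i _ => by ring
  rw [Finset.sum_congr rfl hterm, ← Finset.mul_sum]
  ring

lemma interp_congr {μ ν : ℕ → ℝ} (h : ∀ i ≤ n, μ i = ν i) (x : ℝ) :
    interp n L μ x = interp n L ν x := by
  unfold interp
  rw [h 0 (by omega)]
  congr 1
  refine Finset.sum_congr rfl fun i hi => ?_
  have hi' : i < n := Finset.mem_range.1 hi
  rw [h i (by omega), h (i+1) (by omega)]

/-- `v` affine on the closed cell `j` implies the two-point interpolation formula. -/
lemma affine_rep {v : ℝ → ℝ} {j : ℕ} (hn : 1 ≤ n) (hL : 0 < L) (hj : j < n)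
    (h : ∃ α β : ℝ, ∀ x ∈ Set.Icc (nd n L j) (nd n L (j+1)), v x = α * x + β)
    {x : ℝ} (hx : x ∈ Set.Icc (nd n L j) (nd n L (j+1))) :
    v x = v (nd n L j) + (v (nd n L (j+1)) - v (nd n L j)) * ((n:ℝ)/L) * (x - nd n L j) := by
  obtain ⟨α, β, hab⟩ := h
  have h0 : nd n L j ∈ Set.Icc (nd n L j) (nd n L (j+1)) :=
    ⟨le_refl _, le_of_lt (nd_lt_succ hn hL j)⟩
  have h1 : nd n L (j+1) ∈ Set.Icc (nd n L j) (nd n L (j+1)) :=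
    ⟨le_of_lt (nd_lt_succ hn hL j), le_refl _⟩
  rw [hab x hx, hab _ h0, hab _ h1]
  have hs := nd_succ_sub (L := L) hn j
  have hn' : (n:ℝ) ≠ 0 := by positivity
  have hL' : L ≠ 0 := ne_of_gt hL
  have : (α * nd n L (j+1) + β - (α * nd n L j + β)) * ((n:ℝ)/L) = α := by
    rw [show α * nd n L (j+1) + β - (α * nd n L j + β) = α * (nd n L (j+1) - nd n L j) by ring,
      hs]
    field_simp
  rw [show α * nd n L (j+1) + β - (α * nd n L j + β) = α * (nd n L (j+1) - nd n L j) by ring, hs]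
  field_simp
  ring


/-- cellwise equal to a continuous function -/
def CellForm (n : ℕ) (L : ℝ) (f : ℝ → ℝ) : Prop :=
  ∀ i < n, ∃ g : ℝ → ℝ, Continuous g ∧ ∀ x ∈ Set.Ico (nd n L i) (nd n L (i+1)), f x = g x

/-- cellwise constant -/
def CellConst (n : ℕ) (L : ℝ) (f : ℝ → ℝ) : Prop :=
  ∀ i < n, ∃ cs : ℝ, ∀ x ∈ Set.Ico (nd n L i) (nd n L (i+1)), f x = cs

lemma CellConst.cellForm {f : ℝ → ℝ} (h : CellConst n L f) : CellForm n L f := by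
  intro i hi
  obtain ⟨cs, hcs⟩ := h i hi
  exact ⟨fun _ => cs, continuous_const, hcs⟩

lemma CellConst.comp₂ {f g : ℝ → ℝ} (F : ℝ → ℝ → ℝ)
    (hf : CellConst n L f) (hg : CellConst n L g) :
    CellConst n L (fun x => F (f x) (g x)) := by
  intro i hi
  obtain ⟨c1, h1⟩ := hf i hi
  obtain ⟨c2, h2⟩ := hg i hi
  exact ⟨F c1 c2, fun x hx => by show F (f x) (g x) = F c1 c2; rw [h1 x hx, h2 x hx]⟩

lemma CellConst.comp {f : ℝ → ℝ} (F : ℝ → ℝ)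
    (hf : CellConst n L f) : CellConst n L (fun x => F (f x)) :=
  CellConst.comp₂ (fun a _ => F a) hf hf

lemma cellConst_const (c : ℝ) : CellConst n L (fun _ => c) :=
  fun i _ => ⟨c, fun _ _ => rfl⟩

lemma CellForm.comp₂ {f g : ℝ → ℝ} (F : ℝ → ℝ → ℝ) (hF : Continuous fun p : ℝ × ℝ => F p.1 p.2)
    (hf : CellForm n L f) (hg : CellForm n L g) :
    CellForm n L (fun x => F (f x) (g x)) := by
  intro i hi
  obtain ⟨g1, hg1, h1⟩ := hf i hi
  obtain ⟨g2, hg2, h2⟩ := hg i hi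
  refine ⟨fun x => F (g1 x) (g2 x), hF.comp (hg1.prodMk hg2), fun x hx => by
    show F (f x) (g x) = F (g1 x) (g2 x); rw [h1 x hx, h2 x hx]⟩

lemma CellForm.add {f g : ℝ → ℝ} (hf : CellForm n L f) (hg : CellForm n L g) :
    CellForm n L (fun x => f x + g x) :=
  CellForm.comp₂ (· + ·) (continuous_fst.add continuous_snd) hf hg

lemma CellForm.sub {f g : ℝ → ℝ} (hf : CellForm n L f) (hg : CellForm n L g) :
    CellForm n L (fun x => f x - g x) :=
  CellForm.comp₂ (· - ·) (continuous_fst.sub continuous_snd) hf hg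

lemma CellForm.mul {f g : ℝ → ℝ} (hf : CellForm n L f) (hg : CellForm n L g) :
    CellForm n L (fun x => f x * g x) :=
  CellForm.comp₂ (· * ·) (continuous_fst.mul continuous_snd) hf hg

lemma CellForm.const_mul {f : ℝ → ℝ} (c : ℝ) (hf : CellForm n L f) :
    CellForm n L (fun x => c * f x) :=
  CellForm.mul (cellConst_const c).cellForm hf

lemma cellForm_of_continuous {f : ℝ → ℝ} (hf : Continuous f) : CellForm n L f :=
  fun _ _ => ⟨f, hf, fun _ _ => rfl⟩

lemma CellForm.abs {f : ℝ → ℝ} (hf : CellForm n L f) : CellForm n L (fun x => |f x|) := by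
  intro i hi
  obtain ⟨g, hg, h⟩ := hf i hi
  exact ⟨fun x => |g x|, hg.abs, fun x hx => by show |f x| = |g x|; rw [h x hx]⟩

/-- interval-integrability of cell forms -/
lemma CellForm.intervalIntegrable (hn : 1 ≤ n) (hL : 0 < L) {f : ℝ → ℝ}
    (hf : CellForm n L f) : IntervalIntegrable f volume 0 L := by
  have key : ∀ k ≤ n, IntegrableOn f (Set.Ico 0 (nd n L k)) volume := by
    intro k
    induction k with
    | zero => intro _; rw [nd_zero, Set.Ico_self]; exact integrableOn_empty
    | succ k ih =>
      intro hk
      have hk' : k ≤ n := by omega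
      have hcell : IntegrableOn f (Set.Ico (nd n L k) (nd n L (k+1))) volume := by
        obtain ⟨g, hg, heq⟩ := hf k (by omega)
        have : IntegrableOn g (Set.Ico (nd n L k) (nd n L (k+1))) volume :=
          (hg.integrableOn_Icc).mono_set Set.Ico_subset_Icc_self
        exact this.congr_fun (fun x hx => (heq x hx).symm) measurableSet_Ico
      have := (ih hk').union hcell
      rwa [Set.Ico_union_Ico_eq_Ico (nd_nonneg hL k) (le_of_lt (nd_lt_succ hn hL k))] at this
  have h2 : IntegrableOn f (Set.Ico 0 L) volume := by
    have := key n (le_refl n)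
    rwa [nd_last hn] at this
  rw [intervalIntegrable_iff]
  rw [Set.uIoc_of_le (le_of_lt hL)]
  rw [integrableOn_Ioc_iff_integrableOn_Ioo]
  exact h2.mono_set Set.Ioo_subset_Ico_self

/-- a.e. transfer from `Ico 0 L` to the restricted measure on `Ioc 0 L` -/
lemma ae_restrict_of_Ico {P : ℝ → Prop} (h : ∀ x ∈ Set.Ico 0 L, P x) :
    ∀ᵐ x ∂(volume.restrict (Set.Ioc 0 L)), P x := by
  rw [ae_restrict_iff' measurableSet_Ioc]
  have hsub : {x | ¬ (x ∈ Set.Ioc 0 L → P x)} ⊆ {L} := by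
    intro x hx
    simp only [Set.mem_setOf_eq, Classical.not_imp] at hx
    obtain ⟨hmem, hnp⟩ := hx
    by_contra hne
    exact hnp (h x ⟨le_of_lt hmem.1, lt_of_le_of_ne hmem.2 (by simpa using hne)⟩)
  rw [MeasureTheory.ae_iff]
  exact measure_mono_null hsub Real.volume_singleton

lemma integral_congr_Ico (hL : 0 < L) {f g : ℝ → ℝ} (h : ∀ x ∈ Set.Ico 0 L, f x = g x) :
    ∫ x in (0:ℝ)..L, f x = ∫ x in (0:ℝ)..L, g x := by
  apply intervalIntegral.integral_congr_ae
  rw [Set.uIoc_of_le (le_of_lt hL)]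
  have := ae_restrict_of_Ico (L := L) (P := fun x => f x = g x) h
  rw [ae_restrict_iff' measurableSet_Ioc] at this
  exact this

lemma integral_nonneg_Ico (hL : 0 < L) {f : ℝ → ℝ} (h : ∀ x ∈ Set.Ico 0 L, 0 ≤ f x) :
    0 ≤ ∫ x in (0:ℝ)..L, f x := by
  rw [intervalIntegral.integral_of_le (le_of_lt hL)]
  apply MeasureTheory.setIntegral_nonneg_of_ae_restrict
  filter_upwards [ae_restrict_of_Ico h] with x hx using hx

/-- vanishing of a continuous function that is a.e. zero on `(0, L]` -/
lemma cont_vanish (hL : 0 < L) {M : ℝ → ℝ} (hM : Continuous M)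
    (h : ∀ᵐ x ∂(volume.restrict (Set.Ioc 0 L)), M x = 0) :
    ∀ x ∈ Set.Icc 0 L, M x = 0 := by
  intro x0 hx0
  by_contra hne
  have h1 : 0 < |M x0| := abs_pos.2 hne
  obtain ⟨δ, hδ, h2⟩ := Metric.continuousAt_iff.1 hM.continuousAt _ h1
  have hball : ∀ y, |y - x0| < δ → M y ≠ 0 := by
    intro y hy h0
    have := h2 (show dist y x0 < δ by simpa [Real.dist_eq] using hy)
    rw [h0] at this
    simp [Real.dist_eq] at this
  set u := max 0 (x0 - δ) with hu
  set v := min L (x0 + δ) with hv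
  have huv : u < v := by
    rw [hu, hv]
    rw [max_lt_iff, lt_min_iff, lt_min_iff]
    obtain ⟨h01, h02⟩ := hx0
    refine ⟨⟨hL, by linarith⟩, ⟨by linarith, by linarith⟩⟩
  have hsub : Set.Ioo u v ⊆ {x | ¬ M x = 0} ∩ Set.Ioc 0 L := by
    intro x hx
    constructor
    · apply hball
      rw [abs_sub_lt_iff]
      constructor
      · have : x < v := hx.2
        have : v ≤ x0 + δ := min_le_right _ _
        linarith [hx.2]
      · have : u < x := hx.1
        have : x0 - δ ≤ u := le_max_right _ _
        linarith [hx.1]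
    · constructor
      · exact lt_of_le_of_lt (le_max_left 0 (x0 - δ)) hx.1
      · exact le_of_lt (lt_of_lt_of_le hx.2 (min_le_left _ _))
  have hopen : MeasurableSet {x | ¬ M x = 0} := by
    have : IsOpen {x : ℝ | M x ≠ 0} := isOpen_compl_iff.2 (isClosed_eq hM continuous_const)
    exact this.measurableSet
  have hnull : volume.restrict (Set.Ioc 0 L) {x | ¬ M x = 0} = 0 :=
    MeasureTheory.ae_iff.1 h
  rw [Measure.restrict_apply hopen] at hnull
  have hle : volume (Set.Ioo u v) ≤ 0 := by
    rw [← hnull]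
    apply measure_mono
    intro x hx
    exact ⟨(hsub hx).1, (hsub hx).2⟩
  rw [Real.volume_Ioo] at hle
  have : ENNReal.ofReal (v - u) = 0 := le_antisymm hle zero_le
  rw [ENNReal.ofReal_eq_zero] at this
  linarith


/-- per-edge broken derivative -/
noncomputable def dxf (n : ℕ) (L : ℝ) (v : ℝ → ℝ) (x : ℝ) : ℝ :=
  (v (nd n L (idx n L x + 1)) - v (nd n L (idx n L x))) * ((n : ℝ) / L)

lemma Dx_eq {E : Type} (N : E → ℕ) (ℓ : E → ℝ) (v : E → ℝ → ℝ) (e : E) (x : ℝ) :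
    Dx N ℓ v e x = dxf (N e) (ℓ e) (v e) x := by
  simp only [Dx, dxf, nd, idx]
  push_cast
  ring_nf

lemma dxf_cell (hn : 1 ≤ n) (hL : 0 < L) (v : ℝ → ℝ) {j : ℕ} (hj : j < n)
    {x : ℝ} (hx : x ∈ Set.Ico (nd n L j) (nd n L (j+1))) :
    dxf n L v x = (v (nd n L (j+1)) - v (nd n L j)) * ((n : ℝ) / L) := by
  unfold dxf
  rw [idx_eq hn hL hj hx]

lemma cellConst_dxf (hn : 1 ≤ n) (hL : 0 < L) (v : ℝ → ℝ) : CellConst n L (dxf n L v) :=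
  fun j hj => ⟨(v (nd n L (j+1)) - v (nd n L j)) * ((n : ℝ) / L),
    fun x hx => dxf_cell hn hL v hj hx⟩

lemma dxf_congr {v w : ℝ → ℝ} (hn : 1 ≤ n) (hL : 0 < L)
    (h : ∀ i ≤ n, v (nd n L i) = w (nd n L i)) (x : ℝ) : dxf n L v x = dxf n L w x := by
  unfold dxf
  have h1 := idx_lt (L := L) hn (x := x)
  rw [h _ (by omega), h _ (by omega)]

/-- integral of cellwise nonneg fn is zero implies a.e. zero -/
lemma vanish_ae (hn : 1 ≤ n) (hL : 0 < L) {f : ℝ → ℝ} (hf : CellForm n L f)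
    (h0 : ∀ x ∈ Set.Ico 0 L, 0 ≤ f x) (hz : ∫ x in (0:ℝ)..L, f x = 0) :
    ∀ᵐ x ∂(volume.restrict (Set.Ioc 0 L)), f x = 0 := by
  have hint : IntegrableOn f (Set.Ioc 0 L) volume := by
    have := hf.intervalIntegrable hn hL
    rw [intervalIntegrable_iff, Set.uIoc_of_le (le_of_lt hL)] at this
    exact this
  have := (MeasureTheory.integral_eq_zero_iff_of_nonneg_ae (ae_restrict_of_Ico h0) hint).1
  rw [intervalIntegral.integral_of_le (le_of_lt hL)] at hz
  exact this hz

lemma integral_mono_Ico (hL : 0 < L) {f g : ℝ → ℝ}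
    (hf : IntervalIntegrable f volume 0 L) (hg : IntervalIntegrable g volume 0 L)
    (h : ∀ x ∈ Set.Ico 0 L, f x ≤ g x) :
    ∫ x in (0:ℝ)..L, f x ≤ ∫ x in (0:ℝ)..L, g x := by
  have := integral_nonneg_Ico hL (f := fun x => g x - f x) (fun x hx => by
    have := h x hx; show 0 ≤ g x - f x; linarith)
  rw [intervalIntegral.integral_sub hg hf] at this
  linarith

/-- the key coercivity-extraction lemma -/
lemma diag_vanish (hn : 1 ≤ n) (hL : 0 < L) {w0 w2 M D : ℝ → ℝ}
    (hw0 : CellForm n L w0) (hw2 : CellForm n L w2)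
    (hw0pos : ∀ x ∈ Set.Ico 0 L, 0 < w0 x) (hw2nn : ∀ x ∈ Set.Ico 0 L, 0 ≤ w2 x)
    (hM : Continuous M) (hD : CellConst n L D)
    (hz : ∫ x in (0:ℝ)..L, (w0 x * M x * M x + w2 x * D x * D x) = 0) :
    ∀ x ∈ Set.Icc 0 L, M x = 0 := by
  have hMc : CellForm n L M := fun _ _ => ⟨M, hM, fun _ _ => rfl⟩
  have hf : CellForm n L (fun x => w0 x * M x * M x + w2 x * D x * D x) :=
    ((hw0.mul hMc).mul hMc).add ((hw2.mul hD.cellForm).mul hD.cellForm)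
  have hh : CellForm n L (fun x => w0 x * M x * M x) := (hw0.mul hMc).mul hMc
  have hle : ∫ x in (0:ℝ)..L, w0 x * M x * M x ≤ 0 := by
    refine le_trans (integral_mono_Ico hL (hh.intervalIntegrable hn hL)
      (hf.intervalIntegrable hn hL) ?_) (le_of_eq hz)
    intro x hx
    nlinarith [hw2nn x hx, mul_self_nonneg (D x)]
  have hge : 0 ≤ ∫ x in (0:ℝ)..L, w0 x * M x * M x :=
    integral_nonneg_Ico hL (fun x hx => by nlinarith [hw0pos x hx, mul_self_nonneg (M x)])
  have hz2 : ∫ x in (0:ℝ)..L, w0 x * M x * M x = 0 := le_antisymm hle hge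
  have hae := vanish_ae hn hL hh
    (fun x hx => by nlinarith [hw0pos x hx, mul_self_nonneg (M x)]) hz2
  apply cont_vanish hL hM
  have hne : ∀ᵐ x ∂(volume.restrict (Set.Ioc 0 L)), x ≠ L := by
    rw [MeasureTheory.ae_iff]
    have : {x : ℝ | ¬ x ≠ L} ⊆ {L} := fun x hx => by simpa using hx
    apply measure_mono_null this
    rw [Measure.restrict_apply (measurableSet_singleton L)]
    exact measure_mono_null Set.inter_subset_left Real.volume_singleton
  have hmem := MeasureTheory.ae_restrict_mem (μ := volume) measurableSet_Ioc (s := Set.Ioc (0:ℝ) L)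
  filter_upwards [hae, hne, hmem] with x hx1 hx2 hx3
  have hx4 : x ∈ Set.Ico 0 L := ⟨le_of_lt hx3.1, lt_of_le_of_ne hx3.2 hx2⟩
  have h0 := hw0pos x hx4
  by_contra hM0
  have h6 : 0 < M x * M x := mul_self_pos.2 hM0
  nlinarith

/-- abstract solvability -/
lemma solve_dual {X : Type*} [AddCommGroup X] [Module ℝ X] [FiniteDimensional ℝ X]
    (A : X →ₗ[ℝ] X →ₗ[ℝ] ℝ) (b : X →ₗ[ℝ] ℝ) (hA : ∀ μ, A μ μ = 0 → μ = 0) :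
    ∃ μ, ∀ ν, A μ ν = b ν := by
  have hinj : Function.Injective A := by
    rw [injective_iff_map_eq_zero]
    intro μ hμ
    exact hA μ (by rw [hμ]; rfl)
  have hr : LinearMap.range A = ⊤ := Submodule.eq_top_of_finrank_eq (by
    rw [LinearMap.finrank_range_of_inj hinj]
    exact (Subspace.dual_finrank_eq (K := ℝ) (V := X)).symm)
  obtain ⟨μ, hμ⟩ := LinearMap.range_eq_top.1 hr b
  exact ⟨μ, fun ν => by rw [hμ]⟩

/-- integral of `f * (cell indicator)` -/
lemma integral_cell_indicator (hn : 1 ≤ n) (hL : 0 < L) {j : ℕ} (hj : j < n)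
    {f : ℝ → ℝ} {cs : ℝ} (hf : ∀ x ∈ Set.Ico (nd n L j) (nd n L (j+1)), f x = cs) :
    ∫ x in (0:ℝ)..L, (f x * (if x ∈ Set.Ico (nd n L j) (nd n L (j+1)) then (1:ℝ) else 0))
      = cs * (L / n) := by
  classical
  have hsub : Set.Ioo (nd n L j) (nd n L (j+1)) ⊆ Set.Ioc 0 L := fun x hx =>
    ⟨lt_of_le_of_lt (nd_nonneg hL j) hx.1, le_trans (le_of_lt hx.2) (nd_le hn hL (by omega))⟩
  have hcongr : ∀ᵐ x ∂(volume.restrict (Set.Ioc 0 L)),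
      f x * (if x ∈ Set.Ico (nd n L j) (nd n L (j+1)) then (1:ℝ) else 0)
        = Set.indicator (Set.Ioo (nd n L j) (nd n L (j+1))) (fun _ => cs) x := by
    rw [ae_restrict_iff' measurableSet_Ioc]
    have hbad : {x | ¬ (x ∈ Set.Ioc 0 L →
        f x * (if x ∈ Set.Ico (nd n L j) (nd n L (j+1)) then (1:ℝ) else 0)
          = Set.indicator (Set.Ioo (nd n L j) (nd n L (j+1))) (fun _ => cs) x)}
        ⊆ {nd n L j} := by
      intro x hx
      simp only [Set.mem_setOf_eq, Classical.not_imp] at hx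
      obtain ⟨hmem, hne⟩ := hx
      by_contra hxj
      simp only [Set.mem_singleton_iff] at hxj
      apply hne
      by_cases hc : x ∈ Set.Ico (nd n L j) (nd n L (j+1))
      · have hxIoo : x ∈ Set.Ioo (nd n L j) (nd n L (j+1)) :=
          ⟨lt_of_le_of_ne hc.1 (Ne.symm hxj), hc.2⟩
        rw [if_pos hc, Set.indicator_of_mem hxIoo, hf x hc, mul_one]
      · have hxIoo : x ∉ Set.Ioo (nd n L j) (nd n L (j+1)) := fun hc2 =>
          hc ⟨le_of_lt hc2.1, hc2.2⟩
        rw [if_neg hc, Set.indicator_of_notMem hxIoo, mul_zero]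
    rw [MeasureTheory.ae_iff]
    exact measure_mono_null hbad Real.volume_singleton
  rw [intervalIntegral.integral_of_le (le_of_lt hL),
    MeasureTheory.integral_congr_ae hcongr,
    MeasureTheory.setIntegral_indicator measurableSet_Ioo]
  rw [Set.inter_eq_self_of_subset_right hsub]
  rw [MeasureTheory.setIntegral_const, measureReal_def, Real.volume_Ioo, smul_eq_mul]
  rw [ENNReal.toReal_ofReal (by linarith [nd_lt_succ hn hL j])]
  rw [nd_succ_sub hn]
  ring


end PipeNet
section A5
namespace PipeNet
open MeasureTheory Set intervalIntegral
variable {n : ℕ} {L : ℝ}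

lemma CellForm.div_cc {f g : ℝ → ℝ} (hf : CellForm n L f) (hg : CellConst n L g) :
    CellForm n L (fun x => f x / g x) := by
  intro i hi
  obtain ⟨gf, hgf, h1⟩ := hf i hi
  obtain ⟨cs, h2⟩ := hg i hi
  exact ⟨fun x => gf x / cs, hgf.div_const cs, fun x hx => by
    show f x / g x = gf x / cs; rw [h1 x hx, h2 x hx]⟩

lemma cells_subset (hn : 1 ≤ n) (hL : 0 < L) {i : ℕ} (hi : i < n) :
    Set.Ico (nd n L i) (nd n L (i+1)) ⊆ Set.Ico 0 L := fun x hx =>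
  ⟨le_trans (nd_nonneg hL i) hx.1, lt_of_lt_of_le hx.2 (nd_le hn hL (by omega))⟩

/-- cell forms from statement-style affine pieces -/
lemma cellform_of_affine (hn : 1 ≤ n) (hL : 0 < L) {v : ℝ → ℝ}
    (haff : ∀ i < n, ∃ α β : ℝ, ∀ x ∈ Set.Icc ((i : ℝ) * L / (n : ℝ)) (((i : ℝ) + 1) * L / (n : ℝ)),
      v x = α * x + β) : CellForm n L v := by
  intro i hi
  obtain ⟨α, β, h⟩ := haff i hi
  refine ⟨fun x => α * x + β, by continuity, fun x hx => h x ?_⟩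
  rw [show ((i : ℝ) + 1) * L / (n : ℝ) = nd n L (i+1) from (nd_succ i).symm]
  exact ⟨hx.1, le_of_lt hx.2⟩

/-- statement-style pw const to CellConst -/
lemma cellconst_of_pwconst (hn : 1 ≤ n) (hL : 0 < L) {q : ℝ → ℝ}
    (hq : ∀ i < n, ∀ x ∈ Set.Ico ((i : ℝ) * L / (n : ℝ)) (((i : ℝ) + 1) * L / (n : ℝ)),
      q x = q ((i : ℝ) * L / (n : ℝ))) : CellConst n L q := by
  intro i hi
  refine ⟨q ((i : ℝ) * L / (n : ℝ)), fun x hx => hq i hi x ?_⟩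
  rwa [show ((i : ℝ) + 1) * L / (n : ℝ) = nd n L (i+1) from (nd_succ i).symm]

/-- statement-style pw const: value on cell = value at left node -/
lemma pwconst_eq_left (hn : 1 ≤ n) (hL : 0 < L) {q : ℝ → ℝ}
    (hq : ∀ i < n, ∀ x ∈ Set.Ico ((i : ℝ) * L / (n : ℝ)) (((i : ℝ) + 1) * L / (n : ℝ)),
      q x = q ((i : ℝ) * L / (n : ℝ))) {i : ℕ} (hi : i < n)
    {x : ℝ} (hx : x ∈ Set.Ico (nd n L i) (nd n L (i+1))) : q x = q (nd n L i) := by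
  apply hq i hi x
  rwa [show ((i : ℝ) + 1) * L / (n : ℝ) = nd n L (i+1) from (nd_succ i).symm]

/-- representation of statement-style pw affine functions by the interpolant -/
lemma rep_interp (hn : 1 ≤ n) (hL : 0 < L) {v : ℝ → ℝ}
    (haff : ∀ i < n, ∃ α β : ℝ, ∀ x ∈ Set.Icc ((i : ℝ) * L / (n : ℝ)) (((i : ℝ) + 1) * L / (n : ℝ)),
      v x = α * x + β) :
    ∀ x ∈ Set.Icc 0 L, v x = interp n L (fun i => v (nd n L i)) x := by
  intro x hx
  have hj : idx n L x < n := idx_lt hn L x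
  have hcell := mem_cell_idx_Icc hn hL hx
  have haff' : ∃ α β : ℝ, ∀ y ∈ Set.Icc (nd n L (idx n L x)) (nd n L (idx n L x + 1)),
      v y = α * y + β := by
    obtain ⟨α, β, h⟩ := haff (idx n L x) hj
    exact ⟨α, β, fun y hy => h y (by
      rwa [show ((idx n L x : ℝ) + 1) * L / (n : ℝ) = nd n L (idx n L x + 1) from
        (nd_succ _).symm])⟩
  rw [affine_rep hn hL hj haff' hcell, interp_eval hn hL _ hj hcell]

/-- the per-edge consolidation identity -/
lemma consolidate (hn : 1 ≤ n) (hL : 0 < L) {τ : ℝ} (hτ : τ ≠ 0)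
    {ρp K1 K2 K3 K4 m v ρ Dm Dv : ℝ → ℝ}
    (hρp : CellForm n L ρp) (hiρp : CellForm n L (fun x => 1 / ρp x))
    (hK1 : CellForm n L K1) (hK2 : CellForm n L K2)
    (hK3 : CellForm n L K3) (hK4 : CellForm n L K4)
    (hm : CellForm n L m) (hv : CellForm n L v)
    (hDm : CellForm n L Dm) (hDv : CellForm n L Dv)
    (hρ : ∀ x ∈ Set.Ico 0 L, ρ x = ρp x - τ * Dm x) :
    (1/τ) * (∫ x in (0:ℝ)..L, (1 / ρp x) * m x * v x)
      - (∫ x in (0:ℝ)..L, (K1 x * m x + K2 x * ρ x - K3 x * Dm x) * Dv x)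
      + (∫ x in (0:ℝ)..L, (K1 x * Dm x + K4 x * m x) * v x)
    = (∫ x in (0:ℝ)..L, (((1/τ) * (1 / ρp x) + K4 x) * v x * m x
        + K1 x * (v x * Dm x - Dv x * m x) + (K3 x + τ * K2 x) * Dv x * Dm x))
      - ∫ x in (0:ℝ)..L, K2 x * ρp x * Dv x := by
  have hρc : CellForm n L ρ := by
    intro i hi
    obtain ⟨g1, hg1, h1⟩ := hρp i hi
    obtain ⟨g2, hg2, h2⟩ := hDm i hi
    exact ⟨fun x => g1 x - τ * g2 x, hg1.sub (continuous_const.mul hg2), fun x hx => by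
      rw [hρ x (cells_subset hn hL hi hx), h1 x hx, h2 x hx]⟩
  have i1 : IntervalIntegrable (fun x => (1/τ) * ((1 / ρp x) * m x * v x)) volume 0 L :=
    (CellForm.const_mul _ ((hiρp.mul hm).mul hv)).intervalIntegrable hn hL
  have i2 : IntervalIntegrable (fun x => (K1 x * m x + K2 x * ρ x - K3 x * Dm x) * Dv x)
      volume 0 L :=
    ((((hK1.mul hm).add (hK2.mul hρc)).sub (hK3.mul hDm)).mul hDv).intervalIntegrable hn hL
  have i3 : IntervalIntegrable (fun x => (K1 x * Dm x + K4 x * m x) * v x) volume 0 L :=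
    (((hK1.mul hDm).add (hK4.mul hm)).mul hv).intervalIntegrable hn hL
  have i5 : IntervalIntegrable (fun x => K2 x * ρp x * Dv x) volume 0 L :=
    (((hK2.mul hρp)).mul hDv).intervalIntegrable hn hL
  have i4 : IntervalIntegrable (fun x => (((1/τ) * (1 / ρp x) + K4 x) * v x * m x
      + K1 x * (v x * Dm x - Dv x * m x) + (K3 x + τ * K2 x) * Dv x * Dm x)) volume 0 L := by
    apply CellForm.intervalIntegrable hn hL
    exact ((((((cellConst_const ((1:ℝ)/τ)).cellForm.mul hiρp).add hK4).mul hv).mul hm).add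
      ((hK1.mul ((hv.mul hDm).sub (hDv.mul hm))))).add (((hK3.add
        ((cellConst_const τ).cellForm.mul hK2)).mul hDv).mul hDm)
  rw [← intervalIntegral.integral_const_mul]
  rw [← intervalIntegral.integral_sub i1 i2, ← intervalIntegral.integral_add (i1.sub i2) i3]
  rw [← intervalIntegral.integral_sub i4 i5]
  apply integral_congr_Ico hL
  intro x hx
  rw [hρ x hx]
  field_simp
  ring

end PipeNet
end A5
section A6
namespace PipeNet
open MeasureTheory Set intervalIntegral

lemma integral_fun_congr {f g : ℝ → ℝ} {A B : ℝ} (h : ∀ x, f x = g x) :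
    ∫ x in A..B, f x = ∫ x in A..B, g x := by rw [funext h]

variable {E : Type} [Fintype E]

/-- coordinate space of nodal values -/
abbrev Xc (N : E → ℕ) : Type := ∀ e : E, Fin (N e + 1) → ℝ

noncomputable def toN (N : E → ℕ) (μ : Xc N) (e : E) (i : ℕ) : ℝ :=
  μ e ⟨min i (N e), by omega⟩

noncomputable def Rc (N : E → ℕ) (ℓ : E → ℝ) (μ : Xc N) (e : E) : ℝ → ℝ :=
  interp (N e) (ℓ e) (toN N μ e)

noncomputable def DRc (N : E → ℕ) (ℓ : E → ℝ) (μ : Xc N) (e : E) : ℝ → ℝ :=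
  dxf (N e) (ℓ e) (Rc N ℓ μ e)

lemma toN_add (N : E → ℕ) (μ ν : Xc N) (e : E) :
    toN N (μ + ν) e = fun i => toN N μ e i + toN N ν e i := rfl

lemma toN_add' (N : E → ℕ) (μ ν : Xc N) (e : E) (i : ℕ) :
    toN N (μ + ν) e i = toN N μ e i + toN N ν e i := rfl

lemma toN_smul' (N : E → ℕ) (r : ℝ) (μ : Xc N) (e : E) (i : ℕ) :
    toN N (r • μ) e i = r * toN N μ e i := rfl

lemma toN_smul (N : E → ℕ) (r : ℝ) (μ : Xc N) (e : E) :
    toN N (r • μ) e = fun i => r * toN N μ e i := rfl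

lemma Rc_add (N : E → ℕ) (ℓ : E → ℝ) (μ ν : Xc N) (e : E) (x : ℝ) :
    Rc N ℓ (μ + ν) e x = Rc N ℓ μ e x + Rc N ℓ ν e x := by
  unfold Rc
  rw [toN_add, interp_add]

lemma Rc_smul (N : E → ℕ) (ℓ : E → ℝ) (r : ℝ) (μ : Xc N) (e : E) (x : ℝ) :
    Rc N ℓ (r • μ) e x = r * Rc N ℓ μ e x := by
  unfold Rc
  rw [toN_smul, interp_smul]

lemma DRc_add (N : E → ℕ) (ℓ : E → ℝ) (μ ν : Xc N) (e : E) (x : ℝ) :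
    DRc N ℓ (μ + ν) e x = DRc N ℓ μ e x + DRc N ℓ ν e x := by
  unfold DRc dxf
  rw [Rc_add, Rc_add]
  ring

lemma DRc_smul (N : E → ℕ) (ℓ : E → ℝ) (r : ℝ) (μ : Xc N) (e : E) (x : ℝ) :
    DRc N ℓ (r • μ) e x = r * DRc N ℓ μ e x := by
  unfold DRc dxf
  rw [Rc_smul, Rc_smul]
  ring

lemma Rc_node (N : E → ℕ) (ℓ : E → ℝ) (hn : ∀ e, 1 ≤ N e) (hL : ∀ e, 0 < ℓ e)
    (μ : Xc N) (e : E) {i : ℕ} (hi : i ≤ N e) :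
    Rc N ℓ μ e (nd (N e) (ℓ e) i) = toN N μ e i :=
  interp_node (hn e) (hL e) _ hi

lemma Rc_cont (N : E → ℕ) (ℓ : E → ℝ) (μ : Xc N) (e : E) : Continuous (Rc N ℓ μ e) :=
  interp_continuous _

lemma Rc_cf (N : E → ℕ) (ℓ : E → ℝ) (μ : Xc N) (e : E) :
    CellForm (N e) (ℓ e) (Rc N ℓ μ e) := cellForm_of_continuous (Rc_cont N ℓ μ e)

lemma DRc_cc (N : E → ℕ) (ℓ : E → ℝ) (hn : ∀ e, 1 ≤ N e) (hL : ∀ e, 0 < ℓ e)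
    (μ : Xc N) (e : E) : CellConst (N e) (ℓ e) (DRc N ℓ μ e) :=
  cellConst_dxf (hn e) (hL e) _

/-- the quadratic/bilinear integrand -/
noncomputable def Af (N : E → ℕ) (ℓ : E → ℝ) (w0 w1 w2 : E → ℝ → ℝ) (μ ν : Xc N) : ℝ :=
  ∑ e, ∫ x in (0:ℝ)..(ℓ e), (w0 e x * Rc N ℓ ν e x * Rc N ℓ μ e x
    + w1 e x * (Rc N ℓ ν e x * DRc N ℓ μ e x - DRc N ℓ ν e x * Rc N ℓ μ e x)
    + w2 e x * DRc N ℓ ν e x * DRc N ℓ μ e x)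

lemma Af_int (N : E → ℕ) (ℓ : E → ℝ) (w0 w1 w2 : E → ℝ → ℝ)
    (hn : ∀ e, 1 ≤ N e) (hL : ∀ e, 0 < ℓ e)
    (h0 : ∀ e, CellForm (N e) (ℓ e) (w0 e)) (h1 : ∀ e, CellForm (N e) (ℓ e) (w1 e))
    (h2 : ∀ e, CellForm (N e) (ℓ e) (w2 e)) (μ ν : Xc N) (e : E) :
    IntervalIntegrable (fun x => w0 e x * Rc N ℓ ν e x * Rc N ℓ μ e x
    + w1 e x * (Rc N ℓ ν e x * DRc N ℓ μ e x - DRc N ℓ ν e x * Rc N ℓ μ e x)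
    + w2 e x * DRc N ℓ ν e x * DRc N ℓ μ e x) volume 0 (ℓ e) := by
  apply CellForm.intervalIntegrable (hn e) (hL e)
  have hR := Rc_cf N ℓ μ e; have hR' := Rc_cf N ℓ ν e
  have hD := (DRc_cc N ℓ hn hL μ e).cellForm; have hD' := (DRc_cc N ℓ hn hL ν e).cellForm
  exact ((((h0 e).mul hR').mul hR).add
    ((h1 e).mul ((hR'.mul hD).sub (hD'.mul hR)))).add (((h2 e).mul hD').mul hD)

lemma Af_add_left (N : E → ℕ) (ℓ : E → ℝ) (w0 w1 w2 : E → ℝ → ℝ)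
    (hn : ∀ e, 1 ≤ N e) (hL : ∀ e, 0 < ℓ e)
    (h0 : ∀ e, CellForm (N e) (ℓ e) (w0 e)) (h1 : ∀ e, CellForm (N e) (ℓ e) (w1 e))
    (h2 : ∀ e, CellForm (N e) (ℓ e) (w2 e)) (μ1 μ2 ν : Xc N) :
    Af N ℓ w0 w1 w2 (μ1 + μ2) ν = Af N ℓ w0 w1 w2 μ1 ν + Af N ℓ w0 w1 w2 μ2 ν := by
  unfold Af
  rw [← Finset.sum_add_distrib]
  refine Finset.sum_congr rfl fun e _ => ?_
  rw [← intervalIntegral.integral_add (Af_int N ℓ w0 w1 w2 hn hL h0 h1 h2 μ1 ν e)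
    (Af_int N ℓ w0 w1 w2 hn hL h0 h1 h2 μ2 ν e)]
  refine integral_fun_congr fun x => ?_
  rw [Rc_add, DRc_add]
  ring

lemma Af_smul_left (N : E → ℕ) (ℓ : E → ℝ) (w0 w1 w2 : E → ℝ → ℝ) (r : ℝ) (μ ν : Xc N) :
    Af N ℓ w0 w1 w2 (r • μ) ν = r * Af N ℓ w0 w1 w2 μ ν := by
  unfold Af
  rw [Finset.mul_sum]
  refine Finset.sum_congr rfl fun e _ => ?_
  rw [← intervalIntegral.integral_const_mul]
  refine integral_fun_congr fun x => ?_
  rw [Rc_smul, DRc_smul]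
  ring

lemma Af_add_right (N : E → ℕ) (ℓ : E → ℝ) (w0 w1 w2 : E → ℝ → ℝ)
    (hn : ∀ e, 1 ≤ N e) (hL : ∀ e, 0 < ℓ e)
    (h0 : ∀ e, CellForm (N e) (ℓ e) (w0 e)) (h1 : ∀ e, CellForm (N e) (ℓ e) (w1 e))
    (h2 : ∀ e, CellForm (N e) (ℓ e) (w2 e)) (μ ν1 ν2 : Xc N) :
    Af N ℓ w0 w1 w2 μ (ν1 + ν2) = Af N ℓ w0 w1 w2 μ ν1 + Af N ℓ w0 w1 w2 μ ν2 := by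
  unfold Af
  rw [← Finset.sum_add_distrib]
  refine Finset.sum_congr rfl fun e _ => ?_
  rw [← intervalIntegral.integral_add (Af_int N ℓ w0 w1 w2 hn hL h0 h1 h2 μ ν1 e)
    (Af_int N ℓ w0 w1 w2 hn hL h0 h1 h2 μ ν2 e)]
  refine integral_fun_congr fun x => ?_
  rw [Rc_add, DRc_add]
  ring

lemma Af_smul_right (N : E → ℕ) (ℓ : E → ℝ) (w0 w1 w2 : E → ℝ → ℝ) (r : ℝ) (μ ν : Xc N) :
    Af N ℓ w0 w1 w2 μ (r • ν) = r * Af N ℓ w0 w1 w2 μ ν := by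
  unfold Af
  rw [Finset.mul_sum]
  refine Finset.sum_congr rfl fun e _ => ?_
  rw [← intervalIntegral.integral_const_mul]
  refine integral_fun_congr fun x => ?_
  rw [Rc_smul, DRc_smul]
  ring

/-- the right-hand-side functional -/
noncomputable def bf (N : E → ℕ) (ℓ : E → ℝ) (G H : E → ℝ → ℝ) (ν : Xc N) : ℝ :=
  ∑ e, ∫ x in (0:ℝ)..(ℓ e), (G e x * Rc N ℓ ν e x + H e x * DRc N ℓ ν e x)

lemma bf_int (N : E → ℕ) (ℓ : E → ℝ) (G H : E → ℝ → ℝ)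
    (hn : ∀ e, 1 ≤ N e) (hL : ∀ e, 0 < ℓ e)
    (hG : ∀ e, CellForm (N e) (ℓ e) (G e)) (hH : ∀ e, CellForm (N e) (ℓ e) (H e))
    (ν : Xc N) (e : E) :
    IntervalIntegrable (fun x => G e x * Rc N ℓ ν e x + H e x * DRc N ℓ ν e x)
      volume 0 (ℓ e) := by
  apply CellForm.intervalIntegrable (hn e) (hL e)
  exact ((hG e).mul (Rc_cf N ℓ ν e)).add ((hH e).mul (DRc_cc N ℓ hn hL ν e).cellForm)

lemma bf_add (N : E → ℕ) (ℓ : E → ℝ) (G H : E → ℝ → ℝ)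
    (hn : ∀ e, 1 ≤ N e) (hL : ∀ e, 0 < ℓ e)
    (hG : ∀ e, CellForm (N e) (ℓ e) (G e)) (hH : ∀ e, CellForm (N e) (ℓ e) (H e))
    (ν1 ν2 : Xc N) :
    bf N ℓ G H (ν1 + ν2) = bf N ℓ G H ν1 + bf N ℓ G H ν2 := by
  unfold bf
  rw [← Finset.sum_add_distrib]
  refine Finset.sum_congr rfl fun e _ => ?_
  rw [← intervalIntegral.integral_add (bf_int N ℓ G H hn hL hG hH ν1 e)
    (bf_int N ℓ G H hn hL hG hH ν2 e)]
  refine integral_fun_congr fun x => ?_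
  rw [Rc_add, DRc_add]
  ring

lemma bf_smul (N : E → ℕ) (ℓ : E → ℝ) (G H : E → ℝ → ℝ) (r : ℝ) (ν : Xc N) :
    bf N ℓ G H (r • ν) = r * bf N ℓ G H ν := by
  unfold bf
  rw [Finset.mul_sum]
  refine Finset.sum_congr rfl fun e _ => ?_
  rw [← intervalIntegral.integral_const_mul]
  refine integral_fun_congr fun x => ?_
  rw [Rc_smul, DRc_smul]
  ring

/-- the vertex-condition subspace -/
noncomputable def Svtx {V : Type} [DecidableEq V] (src dst : E → V) (N : E → ℕ) :
    Submodule ℝ (Xc N) where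
  carrier := {μ | ∀ w, ∑ e, ((if dst e = w then toN N μ e (N e) else 0)
    - (if src e = w then toN N μ e 0 else 0)) = 0}
  add_mem' := by
    intro μ ν hμ hν w
    have hterm : ∀ e ∈ Finset.univ, ((if dst e = w then toN N (μ + ν) e (N e) else 0)
        - (if src e = w then toN N (μ + ν) e 0 else 0))
        = ((if dst e = w then toN N μ e (N e) else 0) - (if src e = w then toN N μ e 0 else 0))
          + ((if dst e = w then toN N ν e (N e) else 0)
            - (if src e = w then toN N ν e 0 else 0)) := by
      intro e _
      rw [toN_add', toN_add']
      by_cases h1 : dst e = w <;> by_cases h2 : src e = w <;> simp [h1, h2] <;> ring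
    show ∑ e, ((if dst e = w then toN N (μ + ν) e (N e) else 0)
      - (if src e = w then toN N (μ + ν) e 0 else 0)) = 0
    rw [Finset.sum_congr rfl hterm, Finset.sum_add_distrib, hμ w, hν w, add_zero]
  zero_mem' := by
    intro w
    refine Finset.sum_eq_zero fun e _ => ?_
    have hz : ∀ i, toN N (0 : Xc N) e i = 0 := fun i => rfl
    rw [hz, hz]
    by_cases h1 : dst e = w <;> by_cases h2 : src e = w <;> simp [h1, h2]
  smul_mem' := by
    intro r μ hμ w
    have hterm : ∀ e ∈ Finset.univ, ((if dst e = w then toN N (r • μ) e (N e) else 0)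
        - (if src e = w then toN N (r • μ) e 0 else 0))
        = r * ((if dst e = w then toN N μ e (N e) else 0)
          - (if src e = w then toN N μ e 0 else 0)) := by
      intro e _
      rw [toN_smul', toN_smul']
      by_cases h1 : dst e = w <;> by_cases h2 : src e = w <;> simp [h1, h2] <;> ring
    show ∑ e, ((if dst e = w then toN N (r • μ) e (N e) else 0)
      - (if src e = w then toN N (r • μ) e 0 else 0)) = 0
    rw [Finset.sum_congr rfl hterm, ← Finset.mul_sum, hμ w, mul_zero]

end PipeNet
end A6
section A7
namespace PipeNet
open MeasureTheory Set intervalIntegral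

/-- coefficient defs (top-level so `simp only` can unfold them) -/
noncomputable def K1d {E : Type} (ρl ml : E → ℝ → ℝ) : E → ℝ → ℝ :=
  fun e x => ml e x / (2 * ρl e x ^ 2)
noncomputable def K2d {E : Type} (γ : ℝ) (c : E → ℝ) (ρl : E → ℝ → ℝ) : E → ℝ → ℝ :=
  fun e x => c e * γ / (γ - 1) * ρl e x ^ (γ - 1) / ρl e x
noncomputable def K3d {E : Type} (a : E → ℝ) (ρl : E → ℝ → ℝ) : E → ℝ → ℝ :=
  fun e x => a e / ρl e x ^ 2
noncomputable def K4d {E : Type} (b : E → ℝ) (ρl ml : E → ℝ → ℝ) : E → ℝ → ℝ :=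
  fun e x => b e * |ml e x| / ρl e x ^ 2
noncomputable def w0d {E : Type} (τ : ℝ) (ρp : E → ℝ → ℝ) (b : E → ℝ)
    (ρl ml : E → ℝ → ℝ) : E → ℝ → ℝ :=
  fun e x => (1/τ) * (1 / ρp e x) + K4d b ρl ml e x
noncomputable def w2d {E : Type} (τ γ : ℝ) (a c : E → ℝ) (ρl : E → ℝ → ℝ) : E → ℝ → ℝ :=
  fun e x => K3d a ρl e x + τ * K2d γ c ρl e x
noncomputable def Gfd {E : Type} (τ : ℝ) (ρp mp ρl ml : E → ℝ → ℝ) : E → ℝ → ℝ :=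
  fun e x => (1/τ) * ((1 / ρp e x) * mp e x + K1d ρl ml e x * (ρl e x - ρp e x))
noncomputable def Hfd {E : Type} (γ : ℝ) (c : E → ℝ) (ρp ρl : E → ℝ → ℝ) : E → ℝ → ℝ :=
  fun e x => K2d γ c ρl e x * ρp e x

end PipeNet
end A7

set_option maxHeartbeats 2000000 in
open PipeNet MeasureTheory Set intervalIntegral in
/-- **Well-posedness of the fixed-point iteration (Lemma 6.3).**
Let `τ > 0`, and let `(ρp, mp) ∈ Q_h × V_h` (the previous time step) and the
linearization point `(ρl, ml) ∈ Q_h × V_h` be given with `ρp > 0` and `ρl > 0`.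
Then the linear system of the fixed-point iteration has a unique solution
`(ρ, m) ∈ Q_h × V_h` (uniqueness in the sense that any two solutions agree, on
`[0, ℓ e)` for the piecewise-constant density component and on `[0, ℓ e]` for the
continuous flux component). -/
theorem fixed_point_iteration_wellposedness
    {V E : Type} [Fintype V] [Fintype E] [DecidableEq V]
    (src dst : E → V) (N : E → ℕ) (hN : ∀ e, 1 ≤ N e)
    (ℓ : E → ℝ) (hℓ : ∀ e, 0 < ℓ e)
    (γ : ℝ) (hγ : 1 < γ) (a b c : E → ℝ)
    (ha : ∀ e, 0 ≤ a e) (hb : ∀ e, 0 ≤ b e) (hc : ∀ e, 0 < c e)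
    (τ : ℝ) (hτ : 0 < τ)
    (ρp mp : E → ℝ → ℝ) (hρp : IsPwConst N ℓ ρp) (hmp : InVh src dst N ℓ mp)
    (ρl ml : E → ℝ → ℝ) (hρl : IsPwConst N ℓ ρl) (hml : InVh src dst N ℓ ml)
    (hppos : ∀ e, ∀ x ∈ Set.Icc 0 (ℓ e), 0 < ρp e x)
    (hlpos : ∀ e, ∀ x ∈ Set.Icc 0 (ℓ e), 0 < ρl e x) :
    ∃ ρ m : E → ℝ → ℝ,
      (IsPwConst N ℓ ρ ∧ InVh src dst N ℓ m ∧
        FixedPtLin src dst N ℓ γ a b c τ ρp mp ρl ml ρ m) ∧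
      (∀ ρ' m' : E → ℝ → ℝ,
        IsPwConst N ℓ ρ' → InVh src dst N ℓ m' →
        FixedPtLin src dst N ℓ γ a b c τ ρp mp ρl ml ρ' m' →
        ∀ e, (∀ x ∈ Set.Ico 0 (ℓ e), ρ' e x = ρ e x) ∧
             (∀ x ∈ Set.Icc 0 (ℓ e), m' e x = m e x)) := by
  classical
  obtain ⟨⟨hmpcont, hmpaff⟩, hmpvtx⟩ := hmp
  obtain ⟨⟨hmlcont, hmlaff⟩, hmlvtx⟩ := hml
  have hτ0 : τ ≠ 0 := ne_of_gt hτ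
  -- cellform facts
  have hρlcc : ∀ e, CellConst (N e) (ℓ e) (ρl e) :=
    fun e => cellconst_of_pwconst (hN e) (hℓ e) (hρl e)
  have hρpcc : ∀ e, CellConst (N e) (ℓ e) (ρp e) :=
    fun e => cellconst_of_pwconst (hN e) (hℓ e) (hρp e)
  have hmlcf : ∀ e, CellForm (N e) (ℓ e) (ml e) :=
    fun e => cellform_of_affine (hN e) (hℓ e) (hmlaff e)
  have hmpcf : ∀ e, CellForm (N e) (ℓ e) (mp e) :=
    fun e => cellform_of_affine (hN e) (hℓ e) (hmpaff e)
  have hK1cf : ∀ e, CellForm (N e) (ℓ e) (K1d ρl ml e) :=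
    fun e => (hmlcf e).div_cc (CellConst.comp (fun t => 2 * t ^ 2) (hρlcc e))
  have hK2cf : ∀ e, CellForm (N e) (ℓ e) (K2d γ c ρl e) :=
    fun e => (CellConst.comp (fun t => c e * γ / (γ - 1) * t ^ (γ - 1) / t) (hρlcc e)).cellForm
  have hK3cf : ∀ e, CellForm (N e) (ℓ e) (K3d a ρl e) :=
    fun e => (CellConst.comp (fun t => a e / t ^ 2) (hρlcc e)).cellForm
  have hK4cf : ∀ e, CellForm (N e) (ℓ e) (K4d b ρl ml e) :=
    fun e => (CellForm.const_mul (b e) (hmlcf e).abs).div_cc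
      (CellConst.comp (fun t => t ^ 2) (hρlcc e))
  have hiρpcf : ∀ e, CellForm (N e) (ℓ e) (fun x => 1 / ρp e x) :=
    fun e => (CellConst.comp (fun t => 1 / t) (hρpcc e)).cellForm
  have hw0cf : ∀ e, CellForm (N e) (ℓ e) (w0d τ ρp b ρl ml e) :=
    fun e => ((CellConst.comp (fun t => (1/τ) * (1 / t)) (hρpcc e)).cellForm).add (hK4cf e)
  have hw2cf : ∀ e, CellForm (N e) (ℓ e) (w2d τ γ a c ρl e) :=
    fun e => (hK3cf e).add (CellForm.const_mul τ (hK2cf e))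
  have hGcf : ∀ e, CellForm (N e) (ℓ e) (Gfd τ ρp mp ρl ml e) :=
    fun e => CellForm.const_mul (1/τ)
      (((hiρpcf e).mul (hmpcf e)).add ((hK1cf e).mul
        (CellConst.comp₂ (fun s t => s - t) (hρlcc e) (hρpcc e)).cellForm))
  have hHcf : ∀ e, CellForm (N e) (ℓ e) (Hfd γ c ρp ρl e) :=
    fun e => (hK2cf e).mul (hρpcc e).cellForm
  -- positivity on Ico
  have hρppos' : ∀ e, ∀ x ∈ Set.Ico 0 (ℓ e), 0 < ρp e x :=
    fun e x hx => hppos e x ⟨hx.1, le_of_lt hx.2⟩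
  have hρlpos' : ∀ e, ∀ x ∈ Set.Ico 0 (ℓ e), 0 < ρl e x :=
    fun e x hx => hlpos e x ⟨hx.1, le_of_lt hx.2⟩
  have hγ1 : (0:ℝ) < γ - 1 := by linarith
  have hw0pos : ∀ e, ∀ x ∈ Set.Ico 0 (ℓ e), 0 < w0d τ ρp b ρl ml e x := by
    intro e x hx
    have h1 := hρppos' e x hx
    have h2 := hρlpos' e x hx
    have h3 := hb e
    simp only [w0d, K4d]
    have h4 : 0 ≤ b e * |ml e x| / ρl e x ^ 2 := by positivity
    have h5 : 0 < (1/τ) * (1 / ρp e x) := by positivity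
    linarith
  have hw2nn : ∀ e, ∀ x ∈ Set.Ico 0 (ℓ e), 0 ≤ w2d τ γ a c ρl e x := by
    intro e x hx
    have h1 := hρlpos' e x hx
    have h2 := ha e
    have h3 := (hc e).le
    simp only [w2d, K3d, K2d]
    have h4 : (0:ℝ) ≤ ρl e x ^ (γ - 1) := Real.rpow_nonneg h1.le _
    have h5 : 0 ≤ a e / ρl e x ^ 2 := by positivity
    have h6 : 0 ≤ τ * (c e * γ / (γ - 1) * ρl e x ^ (γ - 1) / ρl e x) := by positivity
    linarith
  
  -- the linear-algebra setup
  haveI : FiniteDimensional ℝ (Xc N) := by infer_instance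
  set S : Submodule ℝ (Xc N) := Svtx src dst N with hSdef
  set W0 := w0d τ ρp b ρl ml with hW0
  set W1 := K1d ρl ml with hW1
  set W2 := w2d τ γ a c ρl with hW2
  set A : Xc N →ₗ[ℝ] Xc N →ₗ[ℝ] ℝ := LinearMap.mk₂ ℝ (Af N ℓ W0 W1 W2)
    (Af_add_left N ℓ W0 W1 W2 hN hℓ hw0cf hK1cf hw2cf)
    (fun r μ ν => Af_smul_left N ℓ W0 W1 W2 r μ ν)
    (Af_add_right N ℓ W0 W1 W2 hN hℓ hw0cf hK1cf hw2cf)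
    (fun r μ ν => Af_smul_right N ℓ W0 W1 W2 r μ ν) with hAdef
  set bb : Xc N →ₗ[ℝ] ℝ :=
    { toFun := bf N ℓ (Gfd τ ρp mp ρl ml) (Hfd γ c ρp ρl),
      map_add' := bf_add N ℓ _ _ hN hℓ hGcf hHcf,
      map_smul' := fun r ν => bf_smul N ℓ _ _ r ν } with hbbdef
  -- definiteness
  have hdiag : ∀ μ : Xc N, Af N ℓ W0 W1 W2 μ μ = 0 → μ = 0 := by
    intro μ hz
    have hpt : ∀ e, (∫ x in (0:ℝ)..(ℓ e), (W0 e x * Rc N ℓ μ e x * Rc N ℓ μ e x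
        + W1 e x * (Rc N ℓ μ e x * DRc N ℓ μ e x - DRc N ℓ μ e x * Rc N ℓ μ e x)
        + W2 e x * DRc N ℓ μ e x * DRc N ℓ μ e x))
        = ∫ x in (0:ℝ)..(ℓ e), (W0 e x * Rc N ℓ μ e x * Rc N ℓ μ e x
          + W2 e x * DRc N ℓ μ e x * DRc N ℓ μ e x) :=
      fun e => integral_fun_congr fun x => by ring
    have hnn : ∀ e ∈ Finset.univ, (0:ℝ) ≤ ∫ x in (0:ℝ)..(ℓ e),
        (W0 e x * Rc N ℓ μ e x * Rc N ℓ μ e x + W2 e x * DRc N ℓ μ e x * DRc N ℓ μ e x) := by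
      intro e _
      apply integral_nonneg_Ico (hℓ e)
      intro x hx
      nlinarith [hw0pos e x hx, hw2nn e x hx, mul_self_nonneg (Rc N ℓ μ e x),
        mul_self_nonneg (DRc N ℓ μ e x)]
    have hsum0 : ∑ e, ∫ x in (0:ℝ)..(ℓ e),
        (W0 e x * Rc N ℓ μ e x * Rc N ℓ μ e x + W2 e x * DRc N ℓ μ e x * DRc N ℓ μ e x) = 0 := by
      rw [← Finset.sum_congr rfl (fun e _ => hpt e)]
      exact hz
    have hzero : ∀ e, ∫ x in (0:ℝ)..(ℓ e),
        (W0 e x * Rc N ℓ μ e x * Rc N ℓ μ e x + W2 e x * DRc N ℓ μ e x * DRc N ℓ μ e x) = 0 :=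
      fun e => (Finset.sum_eq_zero_iff_of_nonneg hnn).1 hsum0 e (Finset.mem_univ e)
    have hvan : ∀ e, ∀ x ∈ Set.Icc 0 (ℓ e), Rc N ℓ μ e x = 0 := fun e =>
      diag_vanish (hN e) (hℓ e) (hw0cf e) (hw2cf e) (hw0pos e) (hw2nn e)
        (Rc_cont N ℓ μ e) (DRc_cc N ℓ hN hℓ μ e) (hzero e)
    funext e i
    have hi : (i : ℕ) ≤ N e := Fin.is_le i
    have h1 : toN N μ e i = 0 := by
      rw [← Rc_node N ℓ hN hℓ μ e hi]
      exact hvan e _ ⟨nd_nonneg (hℓ e) _, nd_le (hN e) (hℓ e) hi⟩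
    have h2 : toN N μ e (i : ℕ) = μ e i := by
      unfold toN
      congr 1
      exact Fin.ext (by simp [min_eq_left hi])
    show μ e i = 0
    rw [← h2, h1]
  have hdiagS : ∀ μS : S, (LinearMap.domRestrict₁₂ A S S) μS μS = 0 → μS = 0 := by
    intro μS h
    exact Subtype.ext (hdiag μS.1 h)
  obtain ⟨μS, hsol⟩ := solve_dual (LinearMap.domRestrict₁₂ A S S) (bb.domRestrict S) hdiagS
  set μ0 : Xc N := (μS : Xc N) with hμ0def
  have hkeyAb : ∀ ν : Xc N, ν ∈ S → Af N ℓ W0 W1 W2 μ0 ν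
      = bf N ℓ (Gfd τ ρp mp ρl ml) (Hfd γ c ρp ρl) ν := by
    intro ν hν
    exact hsol ⟨ν, hν⟩
  
  -- the solution
  set m : E → ℝ → ℝ := Rc N ℓ μ0 with hmdef
  set ρ : E → ℝ → ℝ := fun e x => ρp e x - τ * Dx N ℓ m e x with hρdef
  have hDxm : ∀ e x, Dx N ℓ m e x = DRc N ℓ μ0 e x := fun e x => Dx_eq N ℓ m e x
  have hDxcf : ∀ (v : E → ℝ → ℝ) e, CellForm (N e) (ℓ e) (fun x => Dx N ℓ v e x) := by
    intro v e
    have : (fun x => Dx N ℓ v e x) = dxf (N e) (ℓ e) (v e) := funext (Dx_eq N ℓ v e)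
    rw [this]
    exact (cellConst_dxf (hN e) (hℓ e) _).cellForm
  have hDxcc : ∀ (v : E → ℝ → ℝ) e, CellConst (N e) (ℓ e) (fun x => Dx N ℓ v e x) := by
    intro v e
    have : (fun x => Dx N ℓ v e x) = dxf (N e) (ℓ e) (v e) := funext (Dx_eq N ℓ v e)
    rw [this]
    exact cellConst_dxf (hN e) (hℓ e) _
  -- Dx is constant on each mesh cell
  have hDxcell : ∀ (v : E → ℝ → ℝ) e {i : ℕ}, i < N e →
      ∀ x ∈ Set.Ico (nd (N e) (ℓ e) i) (nd (N e) (ℓ e) (i+1)),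
      Dx N ℓ v e x = Dx N ℓ v e (nd (N e) (ℓ e) i) := by
    intro v e i hi x hx
    rw [Dx_eq, Dx_eq, dxf_cell (hN e) (hℓ e) _ hi hx,
      dxf_cell (hN e) (hℓ e) _ hi ⟨le_refl _, nd_lt_succ (hN e) (hℓ e) i⟩]
  -- G1 : ρ is piecewise constant
  have hG1 : IsPwConst N ℓ ρ := by
    intro e i hi x hx
    have hx' : x ∈ Set.Ico (nd (N e) (ℓ e) i) (nd (N e) (ℓ e) (i+1)) := by
      rwa [show nd (N e) (ℓ e) (i+1) = ((i:ℝ)+1) * ℓ e / (N e : ℝ) from nd_succ i]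
    show ρp e x - τ * Dx N ℓ m e x = ρp e (nd (N e) (ℓ e) i) - τ * Dx N ℓ m e (nd (N e) (ℓ e) i)
    rw [hρp e i hi x hx, hDxcell m e hi x hx']
    rfl
  -- G2 : m ∈ V_h
  have hmnode : ∀ e {i : ℕ}, i ≤ N e → m e (nd (N e) (ℓ e) i) = toN N μ0 e i :=
    fun e i hi => Rc_node N ℓ hN hℓ μ0 e hi
  have hmaff : ∀ e, ∀ i, i < N e → ∃ α β : ℝ,
      ∀ x ∈ Set.Icc ((i : ℝ) * ℓ e / (N e : ℝ)) (((i : ℝ) + 1) * ℓ e / (N e : ℝ)),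
        m e x = α * x + β := by
    intro e i hi
    refine ⟨(toN N μ0 e (i+1) - toN N μ0 e i) * ((N e : ℝ) / ℓ e),
      toN N μ0 e i - (toN N μ0 e (i+1) - toN N μ0 e i) * ((N e : ℝ) / ℓ e) * nd (N e) (ℓ e) i,
      ?_⟩
    intro x hx
    have hx' : x ∈ Set.Icc (nd (N e) (ℓ e) i) (nd (N e) (ℓ e) (i+1)) := by
      rwa [show nd (N e) (ℓ e) (i+1) = ((i:ℝ)+1) * ℓ e / (N e : ℝ) from nd_succ i]
    show interp (N e) (ℓ e) (toN N μ0 e) x = _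
    rw [interp_eval (hN e) (hℓ e) _ hi hx']
    ring
  have hG2 : InVh src dst N ℓ m := by
    refine ⟨⟨fun e => (Rc_cont N ℓ μ0 e).continuousOn, hmaff⟩, ?_⟩
    intro w
    have hterm : ∀ e ∈ Finset.univ,
        ((if dst e = w then m e (ℓ e) else 0) - (if src e = w then m e 0 else 0))
        = ((if dst e = w then toN N μ0 e (N e) else 0)
          - (if src e = w then toN N μ0 e 0 else 0)) := by
      intro e _
      have h1 : m e (ℓ e) = toN N μ0 e (N e) := by
        have := hmnode e (le_refl (N e))
        rwa [nd_last (hN e)] at this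
      have h2 : m e 0 = toN N μ0 e 0 := by
        have := hmnode e (Nat.zero_le (N e))
        rwa [nd_zero] at this
      rw [h1, h2]
    show vtxSum src dst ℓ m w = 0
    unfold vtxSum
    rw [Finset.sum_congr rfl hterm]
    exact μS.2 w
  -- the first equation holds for arbitrary q
  have hEq1 : ∀ q : E → ℝ → ℝ, IsPwConst N ℓ q →
      (1 / τ) * pairE ℓ ρ q + pairE ℓ (Dx N ℓ m) q = (1 / τ) * pairE ℓ ρp q := by
    intro q hq
    simp only [pairE]
    rw [Finset.mul_sum, Finset.mul_sum, ← Finset.sum_add_distrib]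
    refine Finset.sum_congr rfl fun e _ => ?_
    have hqcc : CellConst (N e) (ℓ e) (q e) := cellconst_of_pwconst (hN e) (hℓ e) (hq e)
    have hint1 : IntervalIntegrable (fun x => ρp e x * q e x) volume 0 (ℓ e) :=
      ((hρpcc e).cellForm.mul hqcc.cellForm).intervalIntegrable (hN e) (hℓ e)
    have hint2 : IntervalIntegrable (fun x => τ * (Dx N ℓ m e x * q e x)) volume 0 (ℓ e) :=
      (CellForm.const_mul τ ((hDxcf m e).mul hqcc.cellForm)).intervalIntegrable (hN e) (hℓ e)
    have hsplit : ∫ x in (0:ℝ)..(ℓ e), ρ e x * q e x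
        = (∫ x in (0:ℝ)..(ℓ e), ρp e x * q e x)
          - τ * ∫ x in (0:ℝ)..(ℓ e), Dx N ℓ m e x * q e x := by
      rw [← intervalIntegral.integral_const_mul,
        ← intervalIntegral.integral_sub hint1 hint2]
      exact integral_fun_congr fun x => by simp only [hρdef]; ring
    rw [hsplit]
    field_simp
    ring
  
  -- the second equation
  have hEq2 : ∀ v : E → ℝ → ℝ, InVh src dst N ℓ v →
      (1 / τ) * pairE ℓ (fun e x => (1 / ρp e x) * m e x) v
        - pairE ℓ (fun e x => ml e x / (2 * ρl e x ^ 2) * m e x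
            + (c e * γ / (γ - 1) * ρl e x ^ (γ - 1) / ρl e x) * ρ e x
            - a e / ρl e x ^ 2 * Dx N ℓ m e x) (Dx N ℓ v)
        + pairE ℓ (fun e x => ml e x / (2 * ρl e x ^ 2) * Dx N ℓ m e x
            + b e * |ml e x| / ρl e x ^ 2 * m e x) v
      = (1 / τ) * pairE ℓ (fun e x => (1 / ρp e x) * mp e x
            + ml e x / (2 * ρl e x ^ 2) * (ρl e x - ρp e x)) v := by
    intro v hv
    obtain ⟨⟨hvcont, hvaff⟩, hvvtx⟩ := hv
    set ν : Xc N := (fun e i => v e (nd (N e) (ℓ e) (i : ℕ))) with hνdef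
    have htoNν : ∀ e (i : ℕ), i ≤ N e → toN N ν e i = v e (nd (N e) (ℓ e) i) := by
      intro e i hi
      show v e (nd (N e) (ℓ e) ((⟨min i (N e), by omega⟩ : Fin (N e + 1)) : ℕ)) = _
      simp only [min_eq_left hi]
    have hνS : ν ∈ S := by
      show ∀ w : V, ∑ e, ((if dst e = w then toN N ν e (N e) else 0)
        - (if src e = w then toN N ν e 0 else 0)) = 0
      intro w
      have hterm : ∀ e ∈ Finset.univ,
          ((if dst e = w then toN N ν e (N e) else 0)
            - (if src e = w then toN N ν e 0 else 0))
          = ((if dst e = w then v e (ℓ e) else 0) - (if src e = w then v e 0 else 0)) := by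
        intro e _
        have h1 : toN N ν e (N e) = v e (ℓ e) := by rw [htoNν e (N e) le_rfl, nd_last (hN e)]
        have h2 : toN N ν e 0 = v e 0 := by rw [htoNν e 0 (Nat.zero_le _), nd_zero]
        rw [h1, h2]
      rw [Finset.sum_congr rfl hterm]
      exact hvvtx w
    have hrep : ∀ e, ∀ x ∈ Set.Icc 0 (ℓ e), v e x = Rc N ℓ ν e x := by
      intro e x hx
      rw [rep_interp (hN e) (hℓ e) (hvaff e) x hx]
      exact interp_congr (fun i hi => (htoNν e i hi).symm) x
    have hDxv : ∀ e x, Dx N ℓ v e x = DRc N ℓ ν e x := by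
      intro e x
      rw [Dx_eq]
      exact dxf_congr (hN e) (hℓ e) (fun i hi => by
        rw [Rc_node N ℓ hN hℓ ν e hi]
        exact (htoNν e i hi).symm) x
    have hkey := hkeyAb ν hνS
    simp only [pairE]
    rw [Finset.mul_sum, Finset.mul_sum, ← Finset.sum_sub_distrib, ← Finset.sum_add_distrib]
    have hJint : ∀ e, IntervalIntegrable (fun x => Hfd γ c ρp ρl e x * DRc N ℓ ν e x)
        volume 0 (ℓ e) := fun e =>
      ((hHcf e).mul (DRc_cc N ℓ hN hℓ ν e).cellForm).intervalIntegrable (hN e) (hℓ e)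
    have hGint : ∀ e, IntervalIntegrable (fun x => Gfd τ ρp mp ρl ml e x * Rc N ℓ ν e x)
        volume 0 (ℓ e) := fun e =>
      ((hGcf e).mul (Rc_cf N ℓ ν e)).intervalIntegrable (hN e) (hℓ e)
    have hRHSe : ∀ e ∈ Finset.univ, (1/τ) * (∫ x in (0:ℝ)..(ℓ e),
          ((1 / ρp e x) * mp e x + ml e x / (2 * ρl e x ^ 2) * (ρl e x - ρp e x)) * v e x)
        = (∫ x in (0:ℝ)..(ℓ e), (Gfd τ ρp mp ρl ml e x * Rc N ℓ ν e x
            + Hfd γ c ρp ρl e x * DRc N ℓ ν e x))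
          - ∫ x in (0:ℝ)..(ℓ e), Hfd γ c ρp ρl e x * DRc N ℓ ν e x := by
      intro e _
      rw [intervalIntegral.integral_add (hGint e) (hJint e)]
      have h1 : (1/τ) * (∫ x in (0:ℝ)..(ℓ e),
            ((1 / ρp e x) * mp e x + ml e x / (2 * ρl e x ^ 2) * (ρl e x - ρp e x)) * v e x)
          = ∫ x in (0:ℝ)..(ℓ e), Gfd τ ρp mp ρl ml e x * Rc N ℓ ν e x := by
        rw [← intervalIntegral.integral_const_mul]
        apply integral_congr_Ico (hℓ e)
        intro x hx
        rw [← hrep e x (Set.Ico_subset_Icc_self hx)]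
        simp only [Gfd, K1d]
        ring
      rw [h1]
      ring
    have hconse : ∀ e ∈ Finset.univ,
        (1/τ) * (∫ x in (0:ℝ)..(ℓ e), (1 / ρp e x) * m e x * v e x)
          - (∫ x in (0:ℝ)..(ℓ e), (ml e x / (2 * ρl e x ^ 2) * m e x
              + (c e * γ / (γ - 1) * ρl e x ^ (γ - 1) / ρl e x) * ρ e x
              - a e / ρl e x ^ 2 * Dx N ℓ m e x) * Dx N ℓ v e x)
          + (∫ x in (0:ℝ)..(ℓ e), (ml e x / (2 * ρl e x ^ 2) * Dx N ℓ m e x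
              + b e * |ml e x| / ρl e x ^ 2 * m e x) * v e x)
        = (∫ x in (0:ℝ)..(ℓ e), (W0 e x * Rc N ℓ ν e x * Rc N ℓ μ0 e x
            + W1 e x * (Rc N ℓ ν e x * DRc N ℓ μ0 e x - DRc N ℓ ν e x * Rc N ℓ μ0 e x)
            + W2 e x * DRc N ℓ ν e x * DRc N ℓ μ0 e x))
          - ∫ x in (0:ℝ)..(ℓ e), Hfd γ c ρp ρl e x * DRc N ℓ ν e x := by
      intro e _
      have hb1 : ∫ x in (0:ℝ)..(ℓ e), (1 / ρp e x) * m e x * v e x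
          = ∫ x in (0:ℝ)..(ℓ e), (1 / ρp e x) * m e x * Rc N ℓ ν e x :=
        integral_congr_Ico (hℓ e) fun x hx => by
          rw [hrep e x (Set.Ico_subset_Icc_self hx)]
      have hb2 : ∫ x in (0:ℝ)..(ℓ e), (ml e x / (2 * ρl e x ^ 2) * m e x
            + (c e * γ / (γ - 1) * ρl e x ^ (γ - 1) / ρl e x) * ρ e x
            - a e / ρl e x ^ 2 * Dx N ℓ m e x) * Dx N ℓ v e x
          = ∫ x in (0:ℝ)..(ℓ e), (K1d ρl ml e x * m e x + K2d γ c ρl e x * ρ e x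
            - K3d a ρl e x * DRc N ℓ μ0 e x) * DRc N ℓ ν e x :=
        integral_fun_congr fun x => by
          rw [hDxv, hDxm]
          simp only [K1d, K2d, K3d]
      have hb3 : ∫ x in (0:ℝ)..(ℓ e), (ml e x / (2 * ρl e x ^ 2) * Dx N ℓ m e x
            + b e * |ml e x| / ρl e x ^ 2 * m e x) * v e x
          = ∫ x in (0:ℝ)..(ℓ e), (K1d ρl ml e x * DRc N ℓ μ0 e x
            + K4d b ρl ml e x * m e x) * Rc N ℓ ν e x :=
        integral_congr_Ico (hℓ e) fun x hx => by
          rw [hrep e x (Set.Ico_subset_Icc_self hx), hDxm]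
          simp only [K1d, K4d]
      rw [hb1, hb2, hb3]
      have hcons := consolidate (hN e) (hℓ e) hτ0 (hρpcc e).cellForm (hiρpcf e)
        (hK1cf e) (hK2cf e) (hK3cf e) (hK4cf e)
        (show CellForm (N e) (ℓ e) (m e) from Rc_cf N ℓ μ0 e)
        (Rc_cf N ℓ ν e)
        ((DRc_cc N ℓ hN hℓ μ0 e).cellForm) ((DRc_cc N ℓ hN hℓ ν e).cellForm)
        (show ∀ x ∈ Set.Ico 0 (ℓ e), ρ e x = ρp e x - τ * DRc N ℓ μ0 e x from
          fun x _ => by simp only [hρdef]; rw [hDxm])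
      rw [hcons]
      congr 1
      all_goals
        refine integral_fun_congr fun x => ?_
        simp only [hW0, hW1, hW2, w0d, w2d, Hfd, K1d, K2d, K3d, K4d]
        ring
    have hkey' : ∑ e, ∫ x in (0:ℝ)..(ℓ e), (W0 e x * Rc N ℓ ν e x * Rc N ℓ μ0 e x
          + W1 e x * (Rc N ℓ ν e x * DRc N ℓ μ0 e x - DRc N ℓ ν e x * Rc N ℓ μ0 e x)
          + W2 e x * DRc N ℓ ν e x * DRc N ℓ μ0 e x)
        = ∑ e, ∫ x in (0:ℝ)..(ℓ e), (Gfd τ ρp mp ρl ml e x * Rc N ℓ ν e x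
          + Hfd γ c ρp ρl e x * DRc N ℓ ν e x) := hkey
    rw [Finset.sum_congr rfl hconse, Finset.sum_congr rfl hRHSe,
      Finset.sum_sub_distrib, Finset.sum_sub_distrib, hkey']
  
  -- derive the pointwise density relation from the first equation
  have hU1 : ∀ (ρ2 m2 : E → ℝ → ℝ), IsPwConst N ℓ ρ2 →
      (∀ q : E → ℝ → ℝ, IsPwConst N ℓ q →
        (1 / τ) * pairE ℓ ρ2 q + pairE ℓ (Dx N ℓ m2) q = (1 / τ) * pairE ℓ ρp q) →
      ∀ e0, ∀ x ∈ Set.Ico 0 (ℓ e0), ρ2 e0 x = ρp e0 x - τ * Dx N ℓ m2 e0 x := by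
    intro ρ2 m2 hρ2 heq1 e0 x hx
    have hjlt : idx (N e0) (ℓ e0) x < N e0 := idx_lt (hN e0) _ _
    set j := idx (N e0) (ℓ e0) x with hjdef
    have hcell : x ∈ Set.Ico (nd (N e0) (ℓ e0) j) (nd (N e0) (ℓ e0) (j+1)) :=
      mem_cell_idx (hN e0) (hℓ e0) hx
    set q : E → ℝ → ℝ := (fun e y =>
      if e = e0 ∧ y ∈ Set.Ico (nd (N e0) (ℓ e0) j) (nd (N e0) (ℓ e0) (j+1)) then 1 else 0)
      with hqdef
    have hqpw : IsPwConst N ℓ q := by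
      intro e i hi y hy
      have hy' : y ∈ Set.Ico (nd (N e) (ℓ e) i) (nd (N e) (ℓ e) (i+1)) := by
        rwa [show nd (N e) (ℓ e) (i+1) = ((i:ℝ)+1) * ℓ e / (N e:ℝ) from nd_succ i]
      have hnode : nd (N e) (ℓ e) i ∈ Set.Ico (nd (N e) (ℓ e) i) (nd (N e) (ℓ e) (i+1)) :=
        ⟨le_refl _, nd_lt_succ (hN e) (hℓ e) i⟩
      show q e y = q e (nd (N e) (ℓ e) i)
      by_cases he : e = e0
      · subst he
        by_cases hij : i = j
        · subst hij
          simp only [hqdef]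
          simp [hy', hnode]
        · have h1 : y ∉ Set.Ico (nd (N e) (ℓ e) j) (nd (N e) (ℓ e) (j+1)) := fun hmem =>
            hij ((idx_eq (hN e) (hℓ e) hi hy').symm.trans (idx_eq (hN e) (hℓ e) hjlt hmem))
          have h2 : nd (N e) (ℓ e) i ∉ Set.Ico (nd (N e) (ℓ e) j) (nd (N e) (ℓ e) (j+1)) :=
            fun hmem =>
              hij ((idx_eq (hN e) (hℓ e) hi hnode).symm.trans (idx_eq (hN e) (hℓ e) hjlt hmem))
          simp only [hqdef]
          rw [if_neg (fun h => h1 h.2), if_neg (fun h => h2 h.2)]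
      · simp only [hqdef]
        rw [if_neg (fun h => he h.1), if_neg (fun h => he h.1)]
    have heval := heq1 q hqpw
    have hsingle : ∀ (u : E → ℝ → ℝ),
        (∀ y ∈ Set.Ico (nd (N e0) (ℓ e0) j) (nd (N e0) (ℓ e0) (j+1)),
          u e0 y = u e0 (nd (N e0) (ℓ e0) j)) →
        pairE ℓ u q = u e0 (nd (N e0) (ℓ e0) j) * (ℓ e0 / N e0) := by
      intro u hu
      show (∑ e, ∫ y in (0:ℝ)..(ℓ e), u e y * q e y) = _
      rw [Finset.sum_eq_single_of_mem e0 (Finset.mem_univ e0) (fun e _ hne => by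
        rw [integral_fun_congr (g := fun _ => (0:ℝ)) (fun y => by
          simp only [hqdef]
          rw [if_neg (fun h => hne h.1), mul_zero])]
        simp)]
      rw [integral_fun_congr (g := fun y => u e0 y *
        (if y ∈ Set.Ico (nd (N e0) (ℓ e0) j) (nd (N e0) (ℓ e0) (j+1)) then (1:ℝ) else 0))
        (fun y => by simp only [hqdef]; simp)]
      exact integral_cell_indicator (hN e0) (hℓ e0) hjlt hu
    rw [hsingle ρ2 (fun y hy => pwconst_eq_left (hN e0) (hℓ e0) (hρ2 e0) hjlt hy),
      hsingle (Dx N ℓ m2) (fun y hy => hDxcell m2 e0 hjlt y hy),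
      hsingle ρp (fun y hy => pwconst_eq_left (hN e0) (hℓ e0) (hρp e0) hjlt hy)] at heval
    have hLN : (0:ℝ) < ℓ e0 / N e0 := by
      have h1 : (0:ℝ) < (N e0 : ℝ) := by exact_mod_cast hN e0
      have h2 := hℓ e0
      positivity
    have hnodal : ρ2 e0 (nd (N e0) (ℓ e0) j)
        = ρp e0 (nd (N e0) (ℓ e0) j) - τ * Dx N ℓ m2 e0 (nd (N e0) (ℓ e0) j) := by
      have hLN0 : (ℓ e0 / N e0) ≠ 0 := ne_of_gt hLN
      have h3 : ((1/τ) * ρ2 e0 (nd (N e0) (ℓ e0) j) + Dx N ℓ m2 e0 (nd (N e0) (ℓ e0) j))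
          * (ℓ e0 / N e0)
          = ((1/τ) * ρp e0 (nd (N e0) (ℓ e0) j)) * (ℓ e0 / N e0) := by
        linear_combination heval
      have h4 := mul_right_cancel₀ hLN0 h3
      field_simp at h4
      linarith
    rw [pwconst_eq_left (hN e0) (hℓ e0) (hρ2 e0) hjlt hcell,
      pwconst_eq_left (hN e0) (hℓ e0) (hρp e0) hjlt hcell,
      hDxcell m2 e0 hjlt x hcell, hnodal]
  -- the existence part is done; now uniqueness
  refine ⟨ρ, m, ⟨hG1, hG2, hEq1, hEq2⟩, ?_⟩
  intro ρ2 m2 hρ2 hm2 hFP2 e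
  obtain ⟨⟨hm2cont, hm2aff⟩, hm2vtx⟩ := hm2
  obtain ⟨hFP2a, hFP2b⟩ := hFP2
  have hρ2eq := hU1 ρ2 m2 hρ2 hFP2a
  set vδ : E → ℝ → ℝ := (fun e x => m2 e x - m e x) with hvδdef
  have hvδaff : ∀ e, ∀ i, i < N e → ∃ α β : ℝ,
      ∀ x ∈ Set.Icc ((i : ℝ) * ℓ e / (N e : ℝ)) (((i : ℝ) + 1) * ℓ e / (N e : ℝ)),
        vδ e x = α * x + β := by
    intro e i hi
    obtain ⟨α1, β1, h1⟩ := hm2aff e i hi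
    obtain ⟨α2, β2, h2⟩ := hmaff e i hi
    exact ⟨α1 - α2, β1 - β2, fun x hx => by
      simp only [hvδdef]
      rw [h1 x hx, h2 x hx]
      ring⟩
  have hvδInVh : InVh src dst N ℓ vδ := by
    refine ⟨⟨fun e => (hm2cont e).sub (Rc_cont N ℓ μ0 e).continuousOn, hvδaff⟩, ?_⟩
    intro w
    have hterm : ∀ e ∈ Finset.univ,
        ((if dst e = w then vδ e (ℓ e) else 0) - (if src e = w then vδ e 0 else 0))
        = (((if dst e = w then m2 e (ℓ e) else 0) - (if src e = w then m2 e 0 else 0))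
          - ((if dst e = w then m e (ℓ e) else 0) - (if src e = w then m e 0 else 0))) := by
      intro e _
      simp only [hvδdef]
      by_cases h1 : dst e = w <;> by_cases h2 : src e = w <;> simp [h1, h2] <;> ring
    show vtxSum src dst ℓ vδ w = 0
    unfold vtxSum
    rw [Finset.sum_congr rfl hterm, Finset.sum_sub_distrib]
    have hb1 := hm2vtx w
    have hb2 := hG2.2 w
    unfold vtxSum at hb1 hb2
    rw [hb1, hb2, sub_self]
  have hδ2 := hFP2b vδ hvδInVh
  have hδ1 := hEq2 vδ hvδInVh
  have hDxδ : ∀ e x, Dx N ℓ vδ e x = Dx N ℓ m2 e x - Dx N ℓ m e x := by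
    intro e x
    rw [Dx_eq, Dx_eq, Dx_eq]
    unfold dxf
    simp only [hvδdef]
    ring
  have hm2cf : ∀ e, CellForm (N e) (ℓ e) (m2 e) :=
    fun e => cellform_of_affine (hN e) (hℓ e) (hm2aff e)
  have hvδcf : ∀ e, CellForm (N e) (ℓ e) (vδ e) := fun e =>
    (hm2cf e).sub (show CellForm (N e) (ℓ e) (m e) from Rc_cf N ℓ μ0 e)
  have hρ2cc : ∀ e, CellConst (N e) (ℓ e) (ρ2 e) :=
    fun e => cellconst_of_pwconst (hN e) (hℓ e) (hρ2 e)
  have hρcf : ∀ e, CellForm (N e) (ℓ e) (ρ e) := by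
    intro e
    simp only [hρdef]
    exact (hρpcc e).cellForm.sub (CellForm.const_mul τ (hDxcf m e))
  -- combine the two weak forms tested with vδ
  have hdiff : ∀ e ∈ Finset.univ,
      ((1/τ) * (∫ x in (0:ℝ)..(ℓ e), (1 / ρp e x) * m2 e x * vδ e x)
        - (∫ x in (0:ℝ)..(ℓ e), (ml e x / (2 * ρl e x ^ 2) * m2 e x
            + (c e * γ / (γ - 1) * ρl e x ^ (γ - 1) / ρl e x) * ρ2 e x
            - a e / ρl e x ^ 2 * Dx N ℓ m2 e x) * Dx N ℓ vδ e x)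
        + (∫ x in (0:ℝ)..(ℓ e), (ml e x / (2 * ρl e x ^ 2) * Dx N ℓ m2 e x
            + b e * |ml e x| / ρl e x ^ 2 * m2 e x) * vδ e x))
      - ((1/τ) * (∫ x in (0:ℝ)..(ℓ e), (1 / ρp e x) * m e x * vδ e x)
        - (∫ x in (0:ℝ)..(ℓ e), (ml e x / (2 * ρl e x ^ 2) * m e x
            + (c e * γ / (γ - 1) * ρl e x ^ (γ - 1) / ρl e x) * ρ e x
            - a e / ρl e x ^ 2 * Dx N ℓ m e x) * Dx N ℓ vδ e x)
        + (∫ x in (0:ℝ)..(ℓ e), (ml e x / (2 * ρl e x ^ 2) * Dx N ℓ m e x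
            + b e * |ml e x| / ρl e x ^ 2 * m e x) * vδ e x))
      = ∫ x in (0:ℝ)..(ℓ e), (w0d τ ρp b ρl ml e x * vδ e x * vδ e x
          + w2d τ γ a c ρl e x * Dx N ℓ vδ e x * Dx N ℓ vδ e x) := by
    intro e _
    have ja1 : IntervalIntegrable (fun x => (1/τ) * ((1 / ρp e x) * m2 e x * vδ e x))
        volume 0 (ℓ e) :=
      (CellForm.const_mul _ (((hiρpcf e).mul (hm2cf e)).mul (hvδcf e))).intervalIntegrable
        (hN e) (hℓ e)
    have jb1 : IntervalIntegrable (fun x => (1/τ) * ((1 / ρp e x) * m e x * vδ e x))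
        volume 0 (ℓ e) :=
      (CellForm.const_mul _ (((hiρpcf e).mul
        (show CellForm (N e) (ℓ e) (m e) from Rc_cf N ℓ μ0 e)).mul
          (hvδcf e))).intervalIntegrable (hN e) (hℓ e)
    have hI2cf : ∀ (ms ρs : E → ℝ → ℝ), CellForm (N e) (ℓ e) (ms e) →
        CellForm (N e) (ℓ e) (ρs e) → CellForm (N e) (ℓ e)
          (fun x => (ml e x / (2 * ρl e x ^ 2) * ms e x
            + (c e * γ / (γ - 1) * ρl e x ^ (γ - 1) / ρl e x) * ρs e x
            - a e / ρl e x ^ 2 * Dx N ℓ ms e x) * Dx N ℓ vδ e x) := by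
      intro ms ρs hms hρs
      have h1 : CellForm (N e) (ℓ e) (fun x => K1d ρl ml e x * ms e x
          + K2d γ c ρl e x * ρs e x - K3d a ρl e x * Dx N ℓ ms e x) :=
        (((hK1cf e).mul hms).add ((hK2cf e).mul hρs)).sub ((hK3cf e).mul (hDxcf ms e))
      exact h1.mul (hDxcf vδ e)
    have ja2 := ((hI2cf m2 ρ2 (hm2cf e) (hρ2cc e).cellForm).intervalIntegrable (hN e) (hℓ e))
    have jb2 := ((hI2cf m ρ (show CellForm (N e) (ℓ e) (m e) from Rc_cf N ℓ μ0 e)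
      (hρcf e)).intervalIntegrable (hN e) (hℓ e))
    have hI3cf : ∀ (ms : E → ℝ → ℝ), CellForm (N e) (ℓ e) (ms e) → CellForm (N e) (ℓ e)
        (fun x => (ml e x / (2 * ρl e x ^ 2) * Dx N ℓ ms e x
          + b e * |ml e x| / ρl e x ^ 2 * ms e x) * vδ e x) := by
      intro ms hms
      exact (((hK1cf e).mul (hDxcf ms e)).add ((hK4cf e).mul hms)).mul (hvδcf e)
    have ja3 := ((hI3cf m2 (hm2cf e)).intervalIntegrable (hN e) (hℓ e))
    have jb3 := ((hI3cf m (show CellForm (N e) (ℓ e) (m e) from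
      Rc_cf N ℓ μ0 e)).intervalIntegrable (hN e) (hℓ e))
    rw [← intervalIntegral.integral_const_mul, ← intervalIntegral.integral_const_mul]
    rw [← intervalIntegral.integral_sub ja1 ja2, ← intervalIntegral.integral_add (ja1.sub ja2) ja3]
    rw [← intervalIntegral.integral_sub jb1 jb2, ← intervalIntegral.integral_add (jb1.sub jb2) jb3]
    rw [← intervalIntegral.integral_sub ((ja1.sub ja2).add ja3) ((jb1.sub jb2).add jb3)]
    apply integral_congr_Ico (hℓ e)
    intro x hx
    rw [hρ2eq e x hx]
    simp only [hρdef, hvδdef, w0d, w2d, K1d, K2d, K3d, K4d]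
    rw [hDxδ e x]
    ring
  have h12 := hδ2.trans hδ1.symm
  simp only [pairE] at h12
  rw [Finset.mul_sum, Finset.mul_sum, ← Finset.sum_sub_distrib, ← Finset.sum_sub_distrib,
    ← Finset.sum_add_distrib, ← Finset.sum_add_distrib] at h12
  have h13 := sub_eq_zero_of_eq h12
  rw [← Finset.sum_sub_distrib] at h13
  rw [Finset.sum_congr rfl hdiff] at h13
  -- extract per-edge vanishing
  have hnn : ∀ e ∈ Finset.univ, (0:ℝ) ≤ ∫ x in (0:ℝ)..(ℓ e),
      (w0d τ ρp b ρl ml e x * vδ e x * vδ e x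
        + w2d τ γ a c ρl e x * Dx N ℓ vδ e x * Dx N ℓ vδ e x) := by
    intro e _
    apply integral_nonneg_Ico (hℓ e)
    intro x hx
    nlinarith [hw0pos e x hx, hw2nn e x hx, mul_self_nonneg (vδ e x),
      mul_self_nonneg (Dx N ℓ vδ e x)]
  have hzero : ∀ e, ∫ x in (0:ℝ)..(ℓ e), (w0d τ ρp b ρl ml e x * vδ e x * vδ e x
      + w2d τ γ a c ρl e x * Dx N ℓ vδ e x * Dx N ℓ vδ e x) = 0 :=
    fun e => (Finset.sum_eq_zero_iff_of_nonneg hnn).1 h13 e (Finset.mem_univ e)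
  -- the continuous representative of vδ
  have hvδvan : ∀ e, ∀ x ∈ Set.Icc 0 (ℓ e), vδ e x = 0 := by
    intro e
    set gδ : ℝ → ℝ := interp (N e) (ℓ e) (fun i => vδ e (nd (N e) (ℓ e) i)) with hgδdef
    have hrepδ : ∀ x ∈ Set.Icc 0 (ℓ e), vδ e x = gδ x :=
      rep_interp (hN e) (hℓ e) (hvδaff e)
    have hDgδ : ∀ x, Dx N ℓ vδ e x = dxf (N e) (ℓ e) gδ x := by
      intro x
      rw [Dx_eq]
      exact dxf_congr (hN e) (hℓ e) (fun i hi => by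
        rw [hgδdef, interp_node (hN e) (hℓ e) _ hi]) x
    have hz2 : ∫ x in (0:ℝ)..(ℓ e), (w0d τ ρp b ρl ml e x * gδ x * gδ x
        + w2d τ γ a c ρl e x * dxf (N e) (ℓ e) gδ x * dxf (N e) (ℓ e) gδ x) = 0 := by
      have hcg : (∫ x in (0:ℝ)..(ℓ e), (w0d τ ρp b ρl ml e x * gδ x * gδ x
          + w2d τ γ a c ρl e x * dxf (N e) (ℓ e) gδ x * dxf (N e) (ℓ e) gδ x))
          = ∫ x in (0:ℝ)..(ℓ e), (w0d τ ρp b ρl ml e x * vδ e x * vδ e x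
            + w2d τ γ a c ρl e x * Dx N ℓ vδ e x * Dx N ℓ vδ e x) :=
        integral_congr_Ico (hℓ e) fun x hx => by
          rw [← hrepδ x (Set.Ico_subset_Icc_self hx), ← hDgδ x]
      rw [hcg]
      exact hzero e
    have hvan := diag_vanish (hN e) (hℓ e) (hw0cf e) (hw2cf e) (hw0pos e) (hw2nn e)
      (interp_continuous _) (cellConst_dxf (hN e) (hℓ e) gδ) hz2
    intro x hx
    rw [hrepδ x hx]
    exact hvan x hx
  -- conclude
  have hmIcc : ∀ x ∈ Set.Icc 0 (ℓ e), m2 e x = m e x := by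
    intro x hx
    have := hvδvan e x hx
    simp only [hvδdef] at this
    linarith
  refine ⟨?_, hmIcc⟩
  intro x hx
  have hDxeq : Dx N ℓ m2 e x = Dx N ℓ m e x := by
    rw [Dx_eq, Dx_eq]
    refine dxf_congr (hN e) (hℓ e) (fun i hi => ?_) x
    exact hmIcc _ ⟨nd_nonneg (hℓ e) _, nd_le (hN e) (hℓ e) hi⟩
  rw [hρ2eq e x hx, hDxeq]
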